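/- arXiv:1410.0424 — 3 statements merged into one kernel-verified Lean document; each statement's English description precedes it below -/
import Mathlib

section
/- For every c ≥ 2 and every n, there exists a set of n points in the plane in general position and a c-coloring of it such that every monochromatic triangle contains at least ⌊(c−1)/2⌋ points of the set in its interior. Consequently M_3(c, s) = ∞ for all s < ⌊(c−1)/2⌋. -/
open scoped Classical

noncomputable section

/-- A planar point set is in general position if no three distinct points are collinear. -/
def GenPos (S : Set (ℝ × ℝ)) : Prop :=
  ∀ p ∈ S, ∀ q ∈ S, ∀ r ∈ S, p ≠ q → p ≠ r → q ≠ r →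
    ¬ Collinear ℝ ({p, q, r} : Set (ℝ × ℝ))

/-- Number of points of `S` strictly inside the triangle `a b c`. -/
def triPts (S : Finset (ℝ × ℝ)) (a b c : ℝ × ℝ) : ℕ :=
  (S.filter (fun p => p ∈ interior (convexHull ℝ ({a, b, c} : Set (ℝ × ℝ))))).card

/-- `S` (colored by `χ`) contains a monochromatic triangle with at most `s` interior points. -/
def MonoTriangle {c : ℕ} (S : Finset (ℝ × ℝ)) (χ : ℝ × ℝ → Fin c) (s : ℕ) : Prop :=
  ∃ a ∈ S, ∃ b ∈ S, ∃ d ∈ S, a ≠ b ∧ a ≠ d ∧ b ≠ d ∧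
    χ a = χ b ∧ χ b = χ d ∧ triPts S a b d ≤ s

namespace LBaux
open Finset


def det2 (u v : ℝ × ℝ) : ℝ := u.1 * v.2 - u.2 * v.1

lemma sum_pos_of_lead (B : ℕ) (f : ℕ → ℤ) (Λ : ℝ) (K : ℤ) (s : ℕ) (hsB : s < B)
    (h0 : ∀ t, t < s → f t = 0) (hlead : 1 ≤ f s) (hK : ∀ t, |f t| ≤ K)
    (hΛ2 : 2 ≤ Λ) (hΛ : 2 * (K : ℝ) + 1 ≤ Λ) :
    0 < ∑ t ∈ Finset.range B, (f t : ℝ) * Λ ^ (B - t) := by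
  have hΛ0 : (0:ℝ) < Λ := by linarith
  have hKi : (1:ℤ) ≤ K := le_trans (by calc (1:ℤ) ≤ f s := hlead
    _ ≤ |f s| := le_abs_self _) (hK s)
  have hK0 : (0:ℝ) ≤ (K:ℝ) := by exact_mod_cast le_trans zero_le_one hKi
  have hsplit : ∑ t ∈ Finset.range B, (f t : ℝ) * Λ ^ (B - t)
      = (∑ t ∈ Finset.range (s+1), (f t : ℝ) * Λ ^ (B - t))
        + ∑ t ∈ Finset.Ico (s+1) B, (f t : ℝ) * Λ ^ (B - t) := by
    rw [Finset.range_eq_Ico, ← Finset.sum_Ico_consecutive _ (by omega : 0 ≤ s+1) (by omega : s+1 ≤ B),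
      ← Finset.range_eq_Ico]
  have hhead : (∑ t ∈ Finset.range (s+1), (f t : ℝ) * Λ ^ (B - t))
      = (f s : ℝ) * Λ ^ (B - s) := by
    rw [Finset.sum_range_succ]
    have : ∑ t ∈ Finset.range s, (f t : ℝ) * Λ ^ (B - t) = 0 := by
      apply Finset.sum_eq_zero
      intro t ht
      simp [h0 t (Finset.mem_range.mp ht)]
    rw [this, zero_add]
  have htail : |∑ t ∈ Finset.Ico (s+1) B, (f t : ℝ) * Λ ^ (B - t)|
      ≤ 2 * (K:ℝ) * Λ ^ (B - s - 1) := by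
    calc |∑ t ∈ Finset.Ico (s+1) B, (f t : ℝ) * Λ ^ (B - t)|
        ≤ ∑ t ∈ Finset.Ico (s+1) B, |(f t : ℝ) * Λ ^ (B - t)| := Finset.abs_sum_le_sum_abs _ _
      _ ≤ ∑ t ∈ Finset.Ico (s+1) B, (K:ℝ) * Λ ^ (B - t) := by
          apply Finset.sum_le_sum
          intro t _
          rw [abs_mul, abs_pow, abs_of_pos hΛ0]
          apply mul_le_mul_of_nonneg_right _ (by positivity)
          exact_mod_cast hK t
      _ = ∑ e ∈ Finset.range (B - (s+1)), (K:ℝ) * Λ ^ (B - (s+1+e)) := by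
          rw [Finset.sum_Ico_eq_sum_range]
      _ ≤ ∑ e ∈ Finset.range (B - (s+1)), (K:ℝ) * (Λ ^ (B - s - 1) * (1/2) ^ e) := by
          apply Finset.sum_le_sum
          intro e he
          have heB : e < B - (s+1) := Finset.mem_range.mp he
          apply mul_le_mul_of_nonneg_left _ hK0
          have h1 : B - (s + 1 + e) = (B - s - 1) - e := by omega
          have hXY : Λ ^ (B - s - 1 - e) * Λ ^ e = Λ ^ (B - s - 1) := by
            rw [← pow_add]; congr 1; omega
          have hexp : Λ ^ (B - s - 1) * (1/2:ℝ) ^ e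
              = Λ ^ (B - s - 1 - e) * (Λ/2) ^ e := by
            rw [← hXY, div_pow]
            field_simp
            rw [one_pow, mul_one, ← mul_pow]; congr 1; ring
          rw [h1, hexp]
          nth_rewrite 1 [← mul_one (Λ ^ (B - s - 1 - e))]
          apply mul_le_mul_of_nonneg_left _ (by positivity)
          apply one_le_pow₀ (by linarith : (1:ℝ) ≤ Λ/2)
      _ = (K:ℝ) * Λ ^ (B - s - 1) * ∑ e ∈ Finset.range (B - (s+1)), (1/2:ℝ) ^ e := by
          rw [Finset.mul_sum]; apply Finset.sum_congr rfl; intro e _; ring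
      _ ≤ (K:ℝ) * Λ ^ (B - s - 1) * 2 := by
          apply mul_le_mul_of_nonneg_left (sum_geometric_two_le _) (by positivity)
      _ = 2 * (K:ℝ) * Λ ^ (B - s - 1) := by ring
  rw [hsplit, hhead]
  have hmain : Λ ^ (B - s) ≤ (f s : ℝ) * Λ ^ (B - s) := by
    nth_rewrite 1 [← one_mul (Λ ^ (B - s))]
    apply mul_le_mul_of_nonneg_right _ (by positivity)
    exact_mod_cast hlead
  have hpow : Λ ^ (B - s) = Λ * Λ ^ (B - s - 1) := by
    calc Λ ^ (B - s) = Λ ^ ((B - s - 1) + 1) := by congr 1; omega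
      _ = Λ * Λ ^ (B - s - 1) := by rw [pow_succ]; ring
  have h3 : 2 * (K:ℝ) * Λ ^ (B - s - 1) < Λ ^ (B - s) := by
    rw [hpow]
    have hp : (0:ℝ) < Λ ^ (B - s - 1) := by positivity
    nlinarith
  have h4 : -(2 * (K:ℝ) * Λ ^ (B - s - 1)) ≤ ∑ t ∈ Finset.Ico (s+1) B, (f t : ℝ) * Λ ^ (B - t) := by
    have := (abs_le.mp htail).1; linarith
  nlinarith

lemma sum_neg_of_lead (B : ℕ) (f : ℕ → ℤ) (Λ : ℝ) (K : ℤ) (s : ℕ) (hsB : s < B)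
    (h0 : ∀ t, t < s → f t = 0) (hlead : f s ≤ -1) (hK : ∀ t, |f t| ≤ K)
    (hΛ2 : 2 ≤ Λ) (hΛ : 2 * (K : ℝ) + 1 ≤ Λ) :
    ∑ t ∈ Finset.range B, (f t : ℝ) * Λ ^ (B - t) < 0 := by
  have := sum_pos_of_lead B (fun t => - f t) Λ K s hsB
    (by intro t ht; simp [h0 t ht]) (by show (1:ℤ) ≤ - f s; omega) (by intro t; show |(-f t)| ≤ K; rw [abs_neg]; exact hK t) hΛ2 hΛ
  have heq : ∑ t ∈ Finset.range B, ((- f t : ℤ) : ℝ) * Λ ^ (B - t)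
      = - ∑ t ∈ Finset.range B, (f t : ℝ) * Λ ^ (B - t) := by
    rw [← Finset.sum_neg_distrib]
    apply Finset.sum_congr rfl; intro t _; push_cast; ring
  rw [heq] at this
  linarith




lemma det2_eq_zero_of_collinear {A B C : ℝ × ℝ} (h : Collinear ℝ ({A, B, C} : Set (ℝ × ℝ))) :
    det2 (B - A) (C - A) = 0 := by
  have hA : A ∈ ({A, B, C} : Set (ℝ × ℝ)) := by simp
  rcases (collinear_iff_of_mem hA).mp h with ⟨v, hv⟩
  rcases hv B (by simp) with ⟨tB, hB⟩
  rcases hv C (by simp) with ⟨tC, hC⟩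
  have hB' : B - A = tB • v := by rw [hB]; simp [vadd_eq_add]
  have hC' : C - A = tC • v := by rw [hC]; simp [vadd_eq_add]
  rw [hB', hC']
  simp only [det2, Prod.smul_fst, Prod.smul_snd, smul_eq_mul]
  ring

/-- Barycentric-sign criterion for interior of a triangle. -/
lemma mem_interior_triangle {A B C z : ℝ × ℝ}
    (h1 : 0 < det2 (B - A) (z - A) * det2 (B - A) (C - A))
    (h2 : 0 < det2 (C - A) (z - A) * det2 (C - A) (B - A))
    (h3 : 0 < det2 (C - B) (z - B) * det2 (C - B) (A - B)) :
    z ∈ interior (convexHull ℝ ({A, B, C} : Set (ℝ × ℝ))) := by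
  classical
  set Δ : ℝ := det2 (B - A) (C - A) with hΔ
  -- the open set
  set U : Set (ℝ × ℝ) := {x | 0 < det2 (B - A) (x - A) * det2 (B - A) (C - A)
      ∧ 0 < det2 (C - A) (x - A) * det2 (C - A) (B - A)
      ∧ 0 < det2 (C - B) (x - B) * det2 (C - B) (A - B)} with hU
  have hzU : z ∈ U := ⟨h1, h2, h3⟩
  have hUopen : IsOpen U := by
    have c1 : Continuous fun x : ℝ × ℝ => det2 (B - A) (x - A) * det2 (B - A) (C - A) := by
      simp only [det2]; fun_prop
    have c2 : Continuous fun x : ℝ × ℝ => det2 (C - A) (x - A) * det2 (C - A) (B - A) := by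
      simp only [det2]; fun_prop
    have c3 : Continuous fun x : ℝ × ℝ => det2 (C - B) (x - B) * det2 (C - B) (A - B) := by
      simp only [det2]; fun_prop
    have : U = (fun x : ℝ × ℝ => det2 (B - A) (x - A) * det2 (B - A) (C - A)) ⁻¹' (Set.Ioi 0)
        ∩ ((fun x : ℝ × ℝ => det2 (C - A) (x - A) * det2 (C - A) (B - A)) ⁻¹' (Set.Ioi 0)
        ∩ (fun x : ℝ × ℝ => det2 (C - B) (x - B) * det2 (C - B) (A - B)) ⁻¹' (Set.Ioi 0)) := by
      ext x; simp [hU, Set.mem_Ioi, and_assoc]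
    rw [this]
    exact (c1.isOpen_preimage _ isOpen_Ioi).inter
      ((c2.isOpen_preimage _ isOpen_Ioi).inter (c3.isOpen_preimage _ isOpen_Ioi))
  have hsub : U ⊆ convexHull ℝ ({A, B, C} : Set (ℝ × ℝ)) := by
    intro x hx
    obtain ⟨hx1, hx2, hx3⟩ := hx
    -- barycentric weights (times Δ)
    set gA : ℝ := det2 (C - B) (x - B) * Δ with hgA
    set gB : ℝ := - det2 (C - A) (x - A) * Δ with hgB
    set gC : ℝ := det2 (B - A) (x - A) * Δ with hgC
    have hgA0 : 0 < gA := by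
      have : det2 (C - B) (A - B) = Δ := by simp only [det2, hΔ, Prod.fst_sub, Prod.snd_sub, Prod.fst_neg, Prod.snd_neg, Prod.fst_add, Prod.snd_add]; ring
      rw [hgA]; rw [this] at hx3; exact hx3
    have hgB0 : 0 < gB := by
      have : det2 (C - A) (B - A) = -Δ := by simp only [det2, hΔ, Prod.fst_sub, Prod.snd_sub, Prod.fst_neg, Prod.snd_neg, Prod.fst_add, Prod.snd_add]; ring
      rw [this] at hx2; rw [hgB]; nlinarith
    have hgC0 : 0 < gC := by rw [hgC]; exact hx1
    have hsum : gA + gB + gC = Δ * Δ := by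
      simp only [hgA, hgB, hgC, det2, hΔ, Prod.fst_sub, Prod.snd_sub, Prod.fst_neg, Prod.snd_neg, Prod.fst_add, Prod.snd_add]; ring
    have hsumpos : 0 < gA + gB + gC := by positivity
    -- center of mass representation
    have hcm : gA • A + gB • B + gC • C = (gA + gB + gC) • x := by
      have e1 : gA * A.1 + gB * B.1 + gC * C.1 = (gA + gB + gC) * x.1 := by
        simp only [hgA, hgB, hgC, det2, hΔ, Prod.fst_sub, Prod.snd_sub, Prod.fst_neg, Prod.snd_neg, Prod.fst_add, Prod.snd_add]; ring
      have e2 : gA * A.2 + gB * B.2 + gC * C.2 = (gA + gB + gC) * x.2 := by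
        simp only [hgA, hgB, hgC, det2, hΔ, Prod.fst_sub, Prod.snd_sub, Prod.fst_neg, Prod.snd_neg, Prod.fst_add, Prod.snd_add]; ring
      ext
      · simpa using e1
      · simpa using e2
    -- use centerMass
    have := centerMass_mem_convexHull (R := ℝ) (E := ℝ × ℝ) (ι := Fin 3)
      (s := ({A, B, C} : Set (ℝ × ℝ))) (Finset.univ)
      (w := ![gA, gB, gC]) ?_ ?_ (z := ![A, B, C]) ?_
    · have hw : ∑ i : Fin 3, (![gA, gB, gC]) i = gA + gB + gC := by
        simp [Fin.sum_univ_three]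
      have hcmval : (Finset.univ : Finset (Fin 3)).centerMass ![gA, gB, gC] ![A, B, C] = x := by
        rw [Finset.centerMass]
        rw [hw]
        have : ∑ i : Fin 3, (![gA, gB, gC]) i • (![A, B, C]) i = gA • A + gB • B + gC • C := by
          simp [Fin.sum_univ_three]
        rw [this, hcm, smul_smul, inv_mul_cancel₀ (ne_of_gt hsumpos), one_smul]
      rwa [hcmval] at this
    · intro i _
      fin_cases i <;> simp [le_of_lt hgA0, le_of_lt hgB0, le_of_lt hgC0]
    · simpa [Fin.sum_univ_three] using hsumpos
    · intro i _
      fin_cases i <;> simp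
  exact interior_maximal hsub hUopen hzU



/-- bits agree below s when 2^s divides the difference -/
lemma testBit_eq_of_dvd {a b s t : ℕ} (hab : a ≤ b) (h : 2 ^ s ∣ b - a) (ht : t < s) :
    a.testBit t = b.testBit t := by
  obtain ⟨m, hm⟩ := h
  have hb : b = a + 2 ^ s * m := by omega
  have h1 : a.testBit t = (a % 2 ^ s).testBit t := by
    rw [Nat.testBit_mod_two_pow]
    simp [ht]
  have h2 : b.testBit t = (b % 2 ^ s).testBit t := by
    rw [Nat.testBit_mod_two_pow]
    simp [ht]
  have h3 : a % 2 ^ s = b % 2 ^ s := by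
    rw [hb]; rw [Nat.add_mul_mod_self_left]
  rw [h1, h2, h3]

lemma testBit_eq_at_of_dvd_succ {a b s : ℕ} (hab : a ≤ b) (h : 2 ^ (s+1) ∣ b - a) :
    a.testBit s = b.testBit s := by
  obtain ⟨m, hm⟩ := h
  have hb : b = a + 2 ^ s * (2 * m) := by
    have h2 : 2 ^ (s+1) * m = 2 ^ s * (2 * m) := by ring
    omega
  rw [Nat.testBit_eq_decide_div_mod_eq, Nat.testBit_eq_decide_div_mod_eq, hb,
    Nat.add_mul_div_left _ _ (by positivity : 0 < 2 ^ s)]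
  rw [decide_eq_decide]
  omega

lemma testBit_ne_at {a b s m : ℕ} (hab : a ≤ b) (hm : b - a = 2 ^ s * m) (hodd : m % 2 = 1) :
    a.testBit s ≠ b.testBit s := by
  have hb : b = a + 2 ^ s * m := by omega
  rw [Nat.testBit_eq_decide_div_mod_eq, Nat.testBit_eq_decide_div_mod_eq, hb,
    Nat.add_mul_div_left _ _ (by positivity : 0 < 2 ^ s)]
  rcases Nat.even_or_odd (a / 2 ^ s) with he | ho
  · obtain ⟨u, hu⟩ := he
    simp only [hu]
    intro hcontra
    have := decide_eq_decide.mp hcontra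
    omega
  · obtain ⟨u, hu⟩ := ho
    simp only [hu]
    intro hcontra
    have := decide_eq_decide.mp hcontra
    omega

lemma testBit_add_pow_mul {P t σ : ℕ} :
    (P + t * 2 ^ σ).testBit σ = decide ((P / 2 ^ σ + t) % 2 = 1) := by
  rw [Nat.testBit_eq_decide_div_mod_eq]
  congr 2
  have : P + t * 2 ^ σ = P + 2 ^ σ * t := by ring
  rw [this, Nat.add_mul_div_left _ _ (by positivity : 0 < 2 ^ σ)]




noncomputable section

def Λr (n : ℕ) : ℝ := 4 * n + 5

def bitZ (t i : ℕ) : ℤ := if i.testBit t then 1 else 0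

def yy (n i : ℕ) : ℝ := ∑ t ∈ Finset.range n, (bitZ t i : ℝ) * (Λr n) ^ (n - t)

def ptt (n i : ℕ) : ℝ × ℝ := ((i : ℝ), yy n i)

def cf (a b w t : ℕ) : ℤ :=
  ((b:ℤ) - a) * (bitZ t w - bitZ t a) - ((w:ℤ) - a) * (bitZ t b - bitZ t a)

lemma ptt_injective (n : ℕ) : Function.Injective (ptt n) := by
  intro a b h
  have : ((a:ℝ)) = b := congrArg Prod.fst h
  exact_mod_cast this

lemma det_expand (n a b w : ℕ) :
    det2 (ptt n b - ptt n a) (ptt n w - ptt n a)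
      = ∑ t ∈ Finset.range n, ((cf a b w t : ℝ) * (Λr n) ^ (n - t)) := by
  simp only [det2, ptt, Prod.fst_sub, Prod.snd_sub]
  have hw : yy n w - yy n a = ∑ t ∈ Finset.range n, ((bitZ t w - bitZ t a : ℤ) : ℝ) * (Λr n) ^ (n - t) := by
    rw [yy, yy, ← Finset.sum_sub_distrib]
    apply Finset.sum_congr rfl; intro t _; push_cast; ring
  have hb : yy n b - yy n a = ∑ t ∈ Finset.range n, ((bitZ t b - bitZ t a : ℤ) : ℝ) * (Λr n) ^ (n - t) := by
    rw [yy, yy, ← Finset.sum_sub_distrib]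
    apply Finset.sum_congr rfl; intro t _; push_cast; ring
  rw [hw, hb, Finset.mul_sum, Finset.sum_mul, ← Finset.sum_sub_distrib]
  apply Finset.sum_congr rfl; intro t _
  simp only [cf]; push_cast; ring

lemma cf_bound {n a b w : ℕ} (han : a < n) (hbn : b < n) (hwn : w < n) (t : ℕ) :
    |cf a b w t| ≤ 2 * n := by
  have h1 : |(b:ℤ) - a| ≤ n := by rw [abs_le]; omega
  have h2 : |(w:ℤ) - a| ≤ n := by rw [abs_le]; omega
  have h3 : |bitZ t w - bitZ t a| ≤ 1 := by unfold bitZ; split_ifs <;> norm_num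
  have h4 : |bitZ t b - bitZ t a| ≤ 1 := by unfold bitZ; split_ifs <;> norm_num
  calc |cf a b w t| ≤ |((b:ℤ) - a) * (bitZ t w - bitZ t a)| + |((w:ℤ) - a) * (bitZ t b - bitZ t a)| := abs_sub _ _
    _ = |(b:ℤ) - a| * |bitZ t w - bitZ t a| + |(w:ℤ) - a| * |bitZ t b - bitZ t a| := by
        rw [abs_mul, abs_mul]
    _ ≤ (n:ℤ) * 1 + (n:ℤ) * 1 := by
        have := abs_nonneg ((b:ℤ) - a)
        have := abs_nonneg ((w:ℤ) - a)
        apply add_le_add <;> apply mul_le_mul <;> first | assumption | positivity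
    _ = 2 * n := by ring

end

lemma det_sign_pos {n a b w : ℕ} (han : a < n) (hbn : b < n) (hwn : w < n) {s : ℕ} (hs : s < n)
    (h0 : ∀ t, t < s → cf a b w t = 0) (hlead : 1 ≤ cf a b w s) :
    0 < det2 (ptt n b - ptt n a) (ptt n w - ptt n a) := by
  rw [det_expand]
  apply sum_pos_of_lead n (cf a b w) (Λr n) (2*n) s hs h0 hlead
    (fun t => cf_bound han hbn hwn t)
  · unfold Λr; push_cast; linarith [Nat.cast_nonneg (α := ℝ) n]
  · unfold Λr; push_cast; linarith [Nat.cast_nonneg (α := ℝ) n]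

lemma det_sign_neg {n a b w : ℕ} (han : a < n) (hbn : b < n) (hwn : w < n) {s : ℕ} (hs : s < n)
    (h0 : ∀ t, t < s → cf a b w t = 0) (hlead : cf a b w s ≤ -1) :
    det2 (ptt n b - ptt n a) (ptt n w - ptt n a) < 0 := by
  rw [det_expand]
  apply sum_neg_of_lead n (cf a b w) (Λr n) (2*n) s hs h0 hlead
    (fun t => cf_bound han hbn hwn t)
  · unfold Λr; push_cast; linarith [Nat.cast_nonneg (α := ℝ) n]
  · unfold Λr; push_cast; linarith [Nat.cast_nonneg (α := ℝ) n]


lemma z_mem_interior {n P Q R σ s M t : ℕ}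
    (hPQ : P < Q) (hQn : Q < n) (hRn : R < n)
    (hsσ : s < σ)
    (hQP : Q - P = 2 ^ σ * M) (hModd : M % 2 = 1)
    (hbitlow : ∀ u, u < s → R.testBit u = P.testBit u)
    (hbit_s : R.testBit s ≠ P.testBit s)
    (ht1 : 1 ≤ t) (ht2 : t ≤ M - 1)
    (hpar : ((P / 2 ^ σ + t) % 2 = 1) ↔ R.testBit s = true) :
    ptt n (P + t * 2 ^ σ) ∈ interior (convexHull ℝ
      ({ptt n P, ptt n Q, ptt n R} : Set (ℝ × ℝ))) := by
  set z : ℕ := P + t * 2 ^ σ with hz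
  have hM1 : 1 ≤ M := by omega
  have hpows : (0:ℕ) < 2 ^ σ := by positivity
  have hQeq : Q = P + 2 ^ σ * M := by omega
  have hzQ : z + 2 ^ σ ≤ Q := by
    have h : (t + 1) * 2 ^ σ ≤ M * 2 ^ σ := Nat.mul_le_mul_right _ (by omega)
    have h2 : z + 2 ^ σ = P + (t + 1) * 2 ^ σ := by rw [hz]; ring
    have h3 : P + M * 2 ^ σ = Q := by rw [hQeq]; ring
    omega
  have hzQlt : z < Q := by omega
  have hzn : z < n := by omega
  have hPz : P < z := by
    have : 1 * 2 ^ σ ≤ t * 2 ^ σ := Nat.mul_le_mul_right _ ht1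
    omega
  have hPn : P < n := by omega
  have hσn : σ < n := by
    have h1 : 2 ^ σ * 1 ≤ 2 ^ σ * M := Nat.mul_le_mul_left _ hM1
    have h2 : σ < 2 ^ σ := (Nat.lt_two_pow_self (n := σ))
    omega
  have hsn : s < n := by omega
  -- bit facts
  have hQbitlow : ∀ u, u < σ → P.testBit u = Q.testBit u := by
    intro u hu
    exact testBit_eq_of_dvd (le_of_lt hPQ) (by rw [hQP]; exact dvd_mul_right _ _) hu
  have hzbitlow : ∀ u, u < σ → P.testBit u = z.testBit u := by
    intro u hu
    refine testBit_eq_of_dvd (le_of_lt hPz) ?_ hu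
    have hd : z - P = t * 2 ^ σ := by omega
    rw [hd]; exact dvd_mul_left _ _
  have hQbit_s : P.testBit s = Q.testBit s := hQbitlow s hsσ
  have hzbit_s : P.testBit s = z.testBit s := hzbitlow s hsσ
  have hPQσ : P.testBit σ ≠ Q.testBit σ := testBit_ne_at (le_of_lt hPQ) hQP hModd
  have hβval : P.testBit s = !(R.testBit s) := by
    revert hbit_s
    cases P.testBit s <;> cases R.testBit s <;> simp
  have hQσval : Q.testBit σ = !(P.testBit σ) := by
    revert hPQσ
    cases Q.testBit σ <;> cases P.testBit σ <;> simp
  have hzσ : z.testBit σ = R.testBit s := by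
    rw [hz, testBit_add_pow_mul]
    rcases Bool.eq_false_or_eq_true (R.testBit s) with h | h
    · have hyes : (P / 2 ^ σ + t) % 2 = 1 := hpar.mpr h
      rw [h]
      exact decide_eq_true hyes
    · have hnot : ¬((P / 2 ^ σ + t) % 2 = 1) := by
        intro hcon
        exact absurd (hpar.mp hcon) (by rw [h]; simp)
      rw [h]
      exact decide_eq_false hnot
  -- integer facts
  have hzi : (1:ℤ) ≤ (z:ℤ) - P := by push_cast; omega
  have hQzi : (1:ℤ) ≤ (Q:ℤ) - z := by push_cast; omega
  have hQPi : (1:ℤ) ≤ (Q:ℤ) - P := by push_cast; omega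
  -- common zero-below facts
  have h0_PQz : ∀ u, u < σ → cf P Q z u = 0 := by
    intro u hu
    unfold cf bitZ
    rw [← hQbitlow u hu, ← hzbitlow u hu]
    ring
  have h0_PQR : ∀ u, u < s → cf P Q R u = 0 := by
    intro u hu
    unfold cf bitZ
    rw [← hQbitlow u (by omega), hbitlow u hu]
    ring
  have h0_PRz : ∀ u, u < s → cf P R z u = 0 := by
    intro u hu
    unfold cf bitZ
    rw [hbitlow u hu, ← hzbitlow u (by omega)]
    ring
  have h0_PRQ : ∀ u, u < s → cf P R Q u = 0 := by
    intro u hu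
    unfold cf bitZ
    rw [hbitlow u hu, ← hQbitlow u (by omega)]
    ring
  have h0_QRz : ∀ u, u < s → cf Q R z u = 0 := by
    intro u hu
    unfold cf bitZ
    rw [hbitlow u hu, ← hzbitlow u (by omega), ← hQbitlow u (by omega)]
    ring
  have h0_QRP : ∀ u, u < s → cf Q R P u = 0 := by
    intro u hu
    unfold cf bitZ
    rw [hbitlow u hu, ← hQbitlow u (by omega)]
    ring
  have hzbit_s' : z.testBit s = P.testBit s := hzbit_s.symm
  have hQbit_s' : Q.testBit s = P.testBit s := hQbit_s.symm
  rcases Bool.eq_false_or_eq_true (R.testBit s) with hρ | hρ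
  · -- ρ = true, β = false
    have hβ : P.testBit s = false := by rw [hρ] at hβval; simpa using hβval
    have hβQ : Q.testBit s = false := hQbit_s'.trans hβ
    have hβz : z.testBit s = false := hzbit_s'.trans hβ
    have hzσ' : z.testBit σ = true := hzσ.trans hρ
    have cond1 : 0 < det2 (ptt n Q - ptt n P) (ptt n z - ptt n P)
        * det2 (ptt n Q - ptt n P) (ptt n R - ptt n P) := by
      apply mul_pos
      · apply det_sign_pos hPn hQn hzn hσn h0_PQz
        unfold cf bitZ
        rw [hzσ']
        rcases Bool.eq_false_or_eq_true (P.testBit σ) with hu | hu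
        · have hQσ : Q.testBit σ = false := by rw [hu] at hQσval; simpa using hQσval
          rw [hu, hQσ]; simp; omega
        · have hQσ : Q.testBit σ = true := by rw [hu] at hQσval; simpa using hQσval
          rw [hu, hQσ]; simp; omega
      · apply det_sign_pos hPn hQn hRn hsn h0_PQR
        unfold cf bitZ
        rw [hρ, hβ, hQbit_s'.trans hβ]
        simp; omega
    have cond2 : 0 < det2 (ptt n R - ptt n P) (ptt n z - ptt n P)
        * det2 (ptt n R - ptt n P) (ptt n Q - ptt n P) := by
      apply mul_pos_of_neg_of_neg
      · apply det_sign_neg hPn hRn hzn hsn h0_PRz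
        unfold cf bitZ
        rw [hρ, hβ, hβz]
        simp; omega
      · apply det_sign_neg hPn hRn hQn hsn h0_PRQ
        unfold cf bitZ
        rw [hρ, hβ, hβQ]
        simp; omega
    have cond3 : 0 < det2 (ptt n R - ptt n Q) (ptt n z - ptt n Q)
        * det2 (ptt n R - ptt n Q) (ptt n P - ptt n Q) := by
      apply mul_pos
      · apply det_sign_pos hQn hRn hzn hsn h0_QRz
        unfold cf bitZ
        rw [hρ, hβQ, hβz]
        simp; omega
      · apply det_sign_pos hQn hRn hPn hsn h0_QRP
        unfold cf bitZ
        rw [hρ, hβQ, hβ]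
        simp; omega
    exact mem_interior_triangle cond1 cond2 cond3
  · -- ρ = false, β = true
    have hβ : P.testBit s = true := by rw [hρ] at hβval; simpa using hβval
    have hβQ : Q.testBit s = true := hQbit_s'.trans hβ
    have hβz : z.testBit s = true := hzbit_s'.trans hβ
    have hzσ' : z.testBit σ = false := hzσ.trans hρ
    have cond1 : 0 < det2 (ptt n Q - ptt n P) (ptt n z - ptt n P)
        * det2 (ptt n Q - ptt n P) (ptt n R - ptt n P) := by
      apply mul_pos_of_neg_of_neg
      · apply det_sign_neg hPn hQn hzn hσn h0_PQz
        unfold cf bitZ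
        rw [hzσ']
        rcases Bool.eq_false_or_eq_true (P.testBit σ) with hu | hu
        · have hQσ : Q.testBit σ = false := by rw [hu] at hQσval; simpa using hQσval
          rw [hu, hQσ]; simp; omega
        · have hQσ : Q.testBit σ = true := by rw [hu] at hQσval; simpa using hQσval
          rw [hu, hQσ]; simp; omega
      · apply det_sign_neg hPn hQn hRn hsn h0_PQR
        unfold cf bitZ
        rw [hρ, hβ, hβQ]
        simp; omega
    have cond2 : 0 < det2 (ptt n R - ptt n P) (ptt n z - ptt n P)
        * det2 (ptt n R - ptt n P) (ptt n Q - ptt n P) := by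
      apply mul_pos
      · apply det_sign_pos hPn hRn hzn hsn h0_PRz
        unfold cf bitZ
        rw [hρ, hβ, hβz]
        simp; omega
      · apply det_sign_pos hPn hRn hQn hsn h0_PRQ
        unfold cf bitZ
        rw [hρ, hβ, hβQ]
        simp; omega
    have cond3 : 0 < det2 (ptt n R - ptt n Q) (ptt n z - ptt n Q)
        * det2 (ptt n R - ptt n Q) (ptt n P - ptt n Q) := by
      apply mul_pos_of_neg_of_neg
      · apply det_sign_neg hQn hRn hzn hsn h0_QRz
        unfold cf bitZ
        rw [hρ, hβQ, hβz]
        simp; omega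
      · apply det_sign_neg hQn hRn hPn hsn h0_QRP
        unfold cf bitZ
        rw [hρ, hβQ, hβ]
        simp; omega
    exact mem_interior_triangle cond1 cond2 cond3


def SS (n : ℕ) : Finset (ℝ × ℝ) := (Finset.range n).image (ptt n)

lemma count_core {n c' P Q R σ s M : ℕ}
    (hc'odd : c' % 2 = 1) (hMc : c' ∣ M)
    (hPQ : P < Q) (hQn : Q < n) (hRn : R < n)
    (hsσ : s < σ)
    (hQP : Q - P = 2 ^ σ * M) (hModd : M % 2 = 1)
    (hbitlow : ∀ u, u < s → R.testBit u = P.testBit u)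
    (hbit_s : R.testBit s ≠ P.testBit s) :
    (c' - 1) / 2 ≤ ((SS n).filter (fun p => p ∈ interior (convexHull ℝ
      ({ptt n P, ptt n Q, ptt n R} : Set (ℝ × ℝ))))).card := by
  classical
  have hM1 : 1 ≤ M := by omega
  have hMc' : c' ≤ M := Nat.le_of_dvd (by omega) hMc
  set q : ℕ := P / 2 ^ σ with hq
  set ρn : ℕ := if R.testBit s then 1 else 0 with hρn
  set t₀ : ℕ := if (q + 1) % 2 = ρn then 1 else 2 with ht₀
  have hρn01 : ρn = 0 ∨ ρn = 1 := by rw [hρn]; split <;> simp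
  have ht₀12 : t₀ = 1 ∨ t₀ = 2 := by rw [ht₀]; split <;> simp
  have hparn : ∀ u : ℕ, (q + (t₀ + 2*u)) % 2 = ρn := by
    intro u
    by_cases hcon : (q + 1) % 2 = ρn
    · rw [ht₀, if_pos hcon]
      omega
    · rw [ht₀, if_neg hcon]
      rcases hρn01 with h0 | h0 <;> omega
  have hpar : ∀ u : ℕ, ((P / 2 ^ σ + (t₀ + 2*u)) % 2 = 1) ↔ R.testBit s = true := by
    intro u
    rw [← hq, hparn u, hρn]
    rcases Bool.eq_false_or_eq_true (R.testBit s) with hρ | hρ <;> rw [hρ] <;> simp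
  -- the candidate indices
  have hzlt : ∀ u : ℕ, u < (M-1)/2 → P + (t₀ + 2*u) * 2 ^ σ < n := by
    intro u hu
    have h1 : t₀ + 2*u ≤ M - 1 := by rcases ht₀12 with h | h <;> omega
    have h2 : (t₀ + 2*u) * 2 ^ σ ≤ (M-1) * 2 ^ σ := Nat.mul_le_mul_right _ h1
    have h3 : (M-1) * 2 ^ σ + 2 ^ σ = M * 2 ^ σ := by
      have : M - 1 + 1 = M := by omega
      calc (M-1) * 2 ^ σ + 2 ^ σ = (M - 1 + 1) * 2 ^ σ := by ring
        _ = M * 2 ^ σ := by rw [this]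
    have h4 : 2 ^ σ * M = M * 2 ^ σ := by ring
    have hp : (0:ℕ) < 2 ^ σ := by positivity
    omega
  set F : ℕ → ℝ × ℝ := fun u => ptt n (P + (t₀ + 2*u) * 2 ^ σ) with hF
  have hFinj : Function.Injective F := by
    intro u v huv
    have h1 := ptt_injective n huv
    have h2 : (t₀ + 2*u) * 2 ^ σ = (t₀ + 2*v) * 2 ^ σ := by omega
    have hp : (0:ℕ) < 2 ^ σ := by positivity
    have := Nat.eq_of_mul_eq_mul_right hp h2
    omega
  have hsub : (Finset.range ((M-1)/2)).image F ⊆ (SS n).filter (fun p => p ∈ interior (convexHull ℝ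
      ({ptt n P, ptt n Q, ptt n R} : Set (ℝ × ℝ)))) := by
    intro x hx
    rcases Finset.mem_image.mp hx with ⟨u, hu, hux⟩
    rw [Finset.mem_filter]
    constructor
    · rw [← hux, hF]
      apply Finset.mem_image_of_mem
      rw [Finset.mem_range]
      exact hzlt u (Finset.mem_range.mp hu)
    · rw [← hux, hF]
      exact z_mem_interior hPQ hQn hRn hsσ hQP hModd hbitlow hbit_s
        (by omega) (by have := Finset.mem_range.mp hu; omega) (hpar u)
  calc (c' - 1) / 2 ≤ (M - 1) / 2 := by omega
    _ = ((Finset.range ((M-1)/2)).image F).card := by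
        rw [Finset.card_image_of_injective _ hFinj, Finset.card_range]
    _ ≤ _ := Finset.card_le_card hsub


lemma odd_dvd_cancel {c' e m : ℕ} (hodd : c' % 2 = 1) (h : c' ∣ 2 ^ e * m) : c' ∣ m := by
  have hcop : Nat.Coprime c' (2 ^ e) := by
    apply Nat.Coprime.pow_right
    have h2 : ¬ (2 ∣ c') := by omega
    exact ((Nat.Prime.coprime_iff_not_dvd Nat.prime_two).mpr h2).symm
  exact hcop.dvd_of_dvd_mul_left h

lemma core {n c' i j k : ℕ} (hodd : c' % 2 = 1)
    (hij : i < j) (hjk : j < k) (hkn : k < n)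
    (h1 : c' ∣ j - i) (h2 : c' ∣ k - j) :
    (c' - 1) / 2 ≤ ((SS n).filter (fun p => p ∈ interior (convexHull ℝ
      ({ptt n i, ptt n j, ptt n k} : Set (ℝ × ℝ))))).card := by
  obtain ⟨s₁, a, ha2, hd1⟩ := Nat.exists_eq_pow_mul_and_not_dvd
    (show j - i ≠ 0 by omega) 2 (by norm_num)
  obtain ⟨s₂, b, hb2, hd2⟩ := Nat.exists_eq_pow_mul_and_not_dvd
    (show k - j ≠ 0 by omega) 2 (by norm_num)
  have haodd : a % 2 = 1 := by omega
  have hbodd : b % 2 = 1 := by omega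
  rcases lt_trichotomy s₁ s₂ with hlt | heq | hgt
  · -- pair = (j,k), R = i
    have hset : ({ptt n j, ptt n k, ptt n i} : Set (ℝ × ℝ))
        = {ptt n i, ptt n j, ptt n k} := by
      ext x; simp only [Set.mem_insert_iff, Set.mem_singleton_iff]; tauto
    rw [← hset]
    apply count_core (σ := s₂) (s := s₁) (M := b) hodd (odd_dvd_cancel hodd (hd2 ▸ h2))
      hjk hkn (by omega) hlt hd2 hbodd
    · intro u hu
      exact (testBit_eq_of_dvd (le_of_lt hij) (by rw [hd1]; exact dvd_mul_right _ _) hu)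
    · exact testBit_ne_at (le_of_lt hij) hd1 haodd
  · -- pair = (i,k), R = j
    subst heq
    have habne : a + b ≠ 0 := by omega
    obtain ⟨e, m, hm2, hab⟩ := Nat.exists_eq_pow_mul_and_not_dvd habne 2 (by norm_num)
    have hmodd : m % 2 = 1 := by omega
    have he1 : 1 ≤ e := by
      rcases Nat.eq_zero_or_pos e with h0 | h0
      · subst h0; simp at hab; omega
      · omega
    have hki : k - i = 2 ^ (s₁ + e) * m := by
      have h3 : k - i = (j - i) + (k - j) := by omega
      rw [h3, hd1, hd2, ← Nat.mul_add, hab, pow_add]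
      ring
    have hset : ({ptt n i, ptt n k, ptt n j} : Set (ℝ × ℝ))
        = {ptt n i, ptt n j, ptt n k} := by
      ext x; simp only [Set.mem_insert_iff, Set.mem_singleton_iff]; tauto
    rw [← hset]
    have hck : c' ∣ k - i := by
      have h3 : k - i = (j - i) + (k - j) := by omega
      rw [h3]; exact dvd_add h1 h2
    apply count_core (σ := s₁ + e) (s := s₁) (M := m) hodd (odd_dvd_cancel hodd (hki ▸ hck))
      (by omega) (by omega) (by omega) (by omega) hki hmodd
    · intro u hu
      exact (testBit_eq_of_dvd (le_of_lt hij) (by rw [hd1]; exact dvd_mul_right _ _) hu).symm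
    · exact (testBit_ne_at (le_of_lt hij) hd1 haodd).symm
  · -- pair = (i,j), R = k
    have hki : k - i = 2 ^ s₂ * (2 ^ (s₁ - s₂) * a + b) := by
      have h3 : k - i = (j - i) + (k - j) := by omega
      have h4 : 2 ^ s₁ * a = 2 ^ s₂ * (2 ^ (s₁ - s₂) * a) := by
        rw [← Nat.mul_assoc, ← pow_add]
        congr 2
        omega
      rw [h3, hd1, hd2, Nat.mul_add, h4]
    have hoddfac : (2 ^ (s₁ - s₂) * a + b) % 2 = 1 := by
      have h4 : 2 ^ (s₁ - s₂) = 2 * 2 ^ (s₁ - s₂ - 1) := by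
        rw [← pow_succ']
        congr 1
        omega
      have h5 : 2 ^ (s₁ - s₂) * a = 2 * (2 ^ (s₁ - s₂ - 1) * a) := by
        rw [h4]; ring
      omega
    apply count_core (σ := s₁) (s := s₂) (M := a) hodd (odd_dvd_cancel hodd (hd1 ▸ h1))
      hij (by omega) hkn hgt hd1 haodd
    · intro u hu
      exact (testBit_eq_of_dvd (by omega : i ≤ k) (by rw [hki]; exact dvd_mul_right _ _) hu).symm
    · exact (testBit_ne_at (by omega : i ≤ k) hki hoddfac).symm


lemma noncol_sorted {n i j k : ℕ} (hij : i < j) (hjk : j < k) (hkn : k < n) :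
    ¬ Collinear ℝ ({ptt n i, ptt n j, ptt n k} : Set (ℝ × ℝ)) := by
  intro hcol
  have hdet0 : det2 (ptt n j - ptt n i) (ptt n k - ptt n i) = 0 :=
    det2_eq_zero_of_collinear hcol
  have hex : ∃ t, ¬(j.testBit t = i.testBit t ∧ k.testBit t = i.testBit t) := by
    by_contra hall
    push_neg at hall
    have hijeq : i = j := Nat.eq_of_testBit_eq (fun t => ((hall t).1).symm)
    omega
  obtain ⟨s', hspec, hmin⟩ : ∃ s', ¬(j.testBit s' = i.testBit s' ∧ k.testBit s' = i.testBit s')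
      ∧ ∀ t, t < s' → (j.testBit t = i.testBit t ∧ k.testBit t = i.testBit t) := by
    refine ⟨Nat.find hex, Nat.find_spec hex, ?_⟩
    intro t ht
    have := Nat.find_min hex ht
    tauto
  have hsn : s' < n := by
    by_contra hge
    push_neg at hge
    have hpow : n ≤ 2 ^ s' := le_trans (le_of_lt ((Nat.lt_two_pow_self (n := n)))) (Nat.pow_le_pow_right (by norm_num) hge)
    have hbi : i.testBit s' = false :=
      Nat.testBit_lt_two_pow (lt_of_lt_of_le (by omega : i < n) hpow)
    have hbj : j.testBit s' = false :=
      Nat.testBit_lt_two_pow (lt_of_lt_of_le (by omega : j < n) hpow)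
    have hbk : k.testBit s' = false :=
      Nat.testBit_lt_two_pow (lt_of_lt_of_le hkn hpow)
    exact hspec ⟨hbj.trans hbi.symm, hbk.trans hbi.symm⟩
  have h0 : ∀ t, t < s' → cf i j k t = 0 := by
    intro t ht
    obtain ⟨e1, e2⟩ := hmin t ht
    unfold cf bitZ
    rw [e1, e2]
    ring
  have hcf : 1 ≤ cf i j k s' ∨ cf i j k s' ≤ -1 := by
    have hiji : (1:ℤ) ≤ (j:ℤ) - i := by push_cast; omega
    have hjki : (1:ℤ) ≤ (k:ℤ) - j := by push_cast; omega
    rcases Bool.eq_false_or_eq_true (i.testBit s') with hbi | hbi <;>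
      rcases Bool.eq_false_or_eq_true (j.testBit s') with hbj | hbj <;>
        rcases Bool.eq_false_or_eq_true (k.testBit s') with hbk | hbk
    · exact absurd ⟨hbj.trans hbi.symm, hbk.trans hbi.symm⟩ hspec
    · right; unfold cf bitZ; rw [hbi, hbj, hbk]; simp; omega
    · left; unfold cf bitZ; rw [hbi, hbj, hbk]; simp; omega
    · left; unfold cf bitZ; rw [hbi, hbj, hbk]; simp; omega
    · right; unfold cf bitZ; rw [hbi, hbj, hbk]; simp; omega
    · right; unfold cf bitZ; rw [hbi, hbj, hbk]; simp; omega
    · left; unfold cf bitZ; rw [hbi, hbj, hbk]; simp; omega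
    · exact absurd ⟨hbj.trans hbi.symm, hbk.trans hbi.symm⟩ hspec
  have hin : i < n := by omega
  have hjn : j < n := by omega
  rcases hcf with h | h
  · have := det_sign_pos hin hjn hkn hsn h0 h
    linarith
  · have := det_sign_neg hin hjn hkn hsn h0 h
    linarith



lemma set_perm3 {x y z : ℝ × ℝ} :
    ({x, y, z} : Set (ℝ × ℝ)) = {x, z, y} ∧ ({x, y, z} : Set (ℝ × ℝ)) = {y, x, z}
      ∧ ({x, y, z} : Set (ℝ × ℝ)) = {y, z, x} ∧ ({x, y, z} : Set (ℝ × ℝ)) = {z, x, y}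
      ∧ ({x, y, z} : Set (ℝ × ℝ)) = {z, y, x} := by
  refine ⟨?_, ?_, ?_, ?_, ?_⟩ <;>
    (ext p; simp only [Set.mem_insert_iff, Set.mem_singleton_iff]; tauto)

lemma noncol_unsorted {n a b c : ℕ} (han : a < n) (hbn : b < n) (hcn : c < n)
    (hab : a ≠ b) (hac : a ≠ c) (hbc : b ≠ c) :
    ¬ Collinear ℝ ({ptt n a, ptt n b, ptt n c} : Set (ℝ × ℝ)) := by
  rcases lt_trichotomy a b with h1 | h1 | h1
  · rcases lt_trichotomy b c with h2 | h2 | h2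
    · exact noncol_sorted h1 h2 hcn
    · exact absurd h2 hbc
    · rcases lt_trichotomy a c with h3 | h3 | h3
      · rw [set_perm3.1]
        exact noncol_sorted h3 h2 hbn
      · exact absurd h3 hac
      · rw [set_perm3.2.2.2.1]
        exact noncol_sorted h3 h1 hbn
  · exact absurd h1 hab
  · rcases lt_trichotomy a c with h2 | h2 | h2
    · rw [set_perm3.2.1]
      exact noncol_sorted h1 h2 hcn
    · exact absurd h2 hac
    · rcases lt_trichotomy b c with h3 | h3 | h3
      · rw [set_perm3.2.2.1]
        exact noncol_sorted h3 h2 han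
      · exact absurd h3 hbc
      · rw [set_perm3.2.2.2.2]
        exact noncol_sorted h3 h1 han

lemma core_unsorted {n c' a b d : ℕ} (hodd : c' % 2 = 1)
    (han : a < n) (hbn : b < n) (hdn : d < n)
    (hab : a ≠ b) (had : a ≠ d) (hbd : b ≠ d)
    (h1 : a % c' = b % c') (h2 : b % c' = d % c') :
    (c' - 1) / 2 ≤ ((SS n).filter (fun p => p ∈ interior (convexHull ℝ
      ({ptt n a, ptt n b, ptt n d} : Set (ℝ × ℝ))))).card := by
  have hdvd : ∀ x y : ℕ, x < y → x % c' = y % c' → c' ∣ y - x := by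
    intro x y hxy hmod
    exact (Nat.modEq_iff_dvd' (le_of_lt hxy)).mp hmod
  rcases lt_trichotomy a b with hh1 | hh1 | hh1
  · rcases lt_trichotomy b d with hh2 | hh2 | hh2
    · exact core hodd hh1 hh2 hdn (hdvd _ _ hh1 h1) (hdvd _ _ hh2 h2)
    · exact absurd hh2 hbd
    · rcases lt_trichotomy a d with hh3 | hh3 | hh3
      · rw [set_perm3.1]
        exact core hodd hh3 hh2 hbn (hdvd _ _ hh3 (h1.trans h2)) (hdvd _ _ hh2 h2.symm)
      · exact absurd hh3 had
      · rw [set_perm3.2.2.2.1]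
        exact core hodd hh3 hh1 hbn (hdvd _ _ hh3 ((h1.trans h2).symm)) (hdvd _ _ hh1 h1)
  · exact absurd hh1 hab
  · rcases lt_trichotomy a d with hh2 | hh2 | hh2
    · rw [set_perm3.2.1]
      exact core hodd hh1 hh2 hdn (hdvd _ _ hh1 h1.symm) (hdvd _ _ hh2 (h1.trans h2))
    · exact absurd hh2 had
    · rcases lt_trichotomy b d with hh3 | hh3 | hh3
      · rw [set_perm3.2.2.1]
        exact core hodd hh3 hh2 han (hdvd _ _ hh3 h2) (hdvd _ _ hh2 (h1.trans h2).symm)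
      · exact absurd hh3 hbd
      · rw [set_perm3.2.2.2.2]
        exact core hodd hh3 hh1 han (hdvd _ _ hh3 h2.symm) (hdvd _ _ hh1 h1.symm)


end LBaux

/-- For every `c ≥ 2` and every `n` there is a `c`-colored set of `n` points in general
position in which every monochromatic triangle has at least `⌊(c−1)/2⌋` interior points.
Consequently, for every `s < ⌊(c−1)/2⌋` there is no finite `N` such that every
`c`-colored set of at least `N` points in general position contains a monochromatic
triangle with at most `s` interior points (i.e. `M₃(c, s) = ∞`). -/
theorem lower_bound_floor (c : ℕ) (hc : 2 ≤ c) :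
    (∀ n : ℕ, ∃ S : Finset (ℝ × ℝ), S.card = n ∧ GenPos (S : Set (ℝ × ℝ)) ∧
      ∃ χ : ℝ × ℝ → Fin c,
        ∀ a ∈ S, ∀ b ∈ S, ∀ d ∈ S, a ≠ b → a ≠ d → b ≠ d →
          χ a = χ b → χ b = χ d → (c - 1) / 2 ≤ triPts S a b d) ∧
    (∀ s : ℕ, s < (c - 1) / 2 →
      ¬ ∃ N : ℕ, ∀ S : Finset (ℝ × ℝ), ∀ χ : ℝ × ℝ → Fin c,
          N ≤ S.card → GenPos (S : Set (ℝ × ℝ)) → MonoTriangle S χ s) := by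
  have hpart1 : (∀ n : ℕ, ∃ S : Finset (ℝ × ℝ), S.card = n ∧ GenPos (S : Set (ℝ × ℝ)) ∧
      ∃ χ : ℝ × ℝ → Fin c,
        ∀ a ∈ S, ∀ b ∈ S, ∀ d ∈ S, a ≠ b → a ≠ d → b ≠ d →
          χ a = χ b → χ b = χ d → (c - 1) / 2 ≤ triPts S a b d) := by
    intro n
    set c' : ℕ := if c % 2 = 0 then c - 1 else c with hc'
    have hc'odd : c' % 2 = 1 := by rw [hc']; split <;> omega
    have hc'le : c' ≤ c := by rw [hc']; split <;> omega
    have hc'pos : 0 < c' := by rw [hc']; split <;> omega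
    have hchalf : (c - 1) / 2 = (c' - 1) / 2 := by rw [hc']; split <;> omega
    refine ⟨LBaux.SS n, ?_, ?_, ?_⟩
    · rw [LBaux.SS, Finset.card_image_of_injective _ (LBaux.ptt_injective n),
        Finset.card_range]
    · intro p hp q hq r hr hpq hpr hqr
      rw [Finset.mem_coe, LBaux.SS, Finset.mem_image] at hp hq hr
      obtain ⟨ip, hip, rfl⟩ := hp
      obtain ⟨iq, hiq, rfl⟩ := hq
      obtain ⟨ir, hir, rfl⟩ := hr
      exact LBaux.noncol_unsorted (Finset.mem_range.mp hip) (Finset.mem_range.mp hiq)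
        (Finset.mem_range.mp hir)
        (fun h => hpq (by rw [h])) (fun h => hpr (by rw [h])) (fun h => hqr (by rw [h]))
    · refine ⟨fun p => ⟨⌊p.1⌋₊ % c', lt_of_lt_of_le (Nat.mod_lt _ hc'pos) hc'le⟩, ?_⟩
      intro a ha b hb d hd hab had hbd hχ1 hχ2
      rw [LBaux.SS, Finset.mem_image] at ha hb hd
      obtain ⟨ia, hia, rfl⟩ := ha
      obtain ⟨ib, hib, rfl⟩ := hb
      obtain ⟨id', hid, rfl⟩ := hd
      have hfl : ∀ i : ℕ, ⌊(LBaux.ptt n i).1⌋₊ = i := by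
        intro i; simp [LBaux.ptt]
      have h1 : ia % c' = ib % c' := by
        have h := congrArg Fin.val hχ1
        simpa [hfl] using h
      have h2 : ib % c' = id' % c' := by
        have h := congrArg Fin.val hχ2
        simpa [hfl] using h
      rw [hchalf]
      have hcount := LBaux.core_unsorted hc'odd (Finset.mem_range.mp hia)
        (Finset.mem_range.mp hib) (Finset.mem_range.mp hid)
        (fun h => hab (by rw [h])) (fun h => had (by rw [h])) (fun h => hbd (by rw [h])) h1 h2
      unfold triPts
      convert hcount using 2
  refine ⟨hpart1, ?_⟩
  rintro s hs ⟨N, hN⟩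
  obtain ⟨S, hcard, hgen, χ, hχ⟩ := hpart1 N
  obtain ⟨a, ha, b, hb, d, hd, hab, had, hbd, h1, h2, hle⟩ :=
    hN S χ (le_of_eq hcard.symm) hgen
  have := hχ a ha b hb d hd hab had hbd h1 h2
  omega
end
end

section
/- Let H be a Horton set with even part H⁺ and odd part H⁻ (in x-order). If h_a <_x h_b are two consecutive points of H⁻ (i.e., their indices in H differ by 2), and h_c is any point of H⁺, then the triangle h_a h_b h_c contains no point of H in its interior. -/
open scoped Classical

noncomputable section

/-- The elements at even positions (0-based: positions 0,2,4,…) of a list. -/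
def everyOther : List (ℝ × ℝ) → List (ℝ × ℝ)
  | [] => []
  | [a] => [a]
  | a :: _ :: l => a :: everyOther l

/-- A list of points sorted by strictly increasing x-coordinate. -/
def SortedX (l : List (ℝ × ℝ)) : Prop := l.Pairwise (fun p q => p.1 < q.1)

/-- `p` lies strictly above the (non-vertical) line through `a` and `b`. -/
def AboveLine (a b p : ℝ × ℝ) : Prop :=
  a.2 + (b.2 - a.2) / (b.1 - a.1) * (p.1 - a.1) < p.2

/-- `p` lies strictly below the (non-vertical) line through `a` and `b`. -/
def BelowLine (a b p : ℝ × ℝ) : Prop :=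
  p.2 < a.2 + (b.2 - a.2) / (b.1 - a.1) * (p.1 - a.1)

/-- Horton sets, as lists sorted by x-coordinate. For a list `l`, the odd points
`H⁻` are `everyOther l` (1-indexed positions 1,3,5,…) and the even points `H⁺` are
`everyOther l.tail` (positions 2,4,6,…). Both parts are recursively Horton, every
line through two points of `H⁺` leaves all of `H⁻` strictly below it, and every
line through two points of `H⁻` leaves all of `H⁺` strictly above it. -/
inductive IsHorton : List (ℝ × ℝ) → Prop where
  | small : ∀ l : List (ℝ × ℝ), l.length ≤ 2 → SortedX l → IsHorton l
  | step : ∀ l : List (ℝ × ℝ), SortedX l → 3 ≤ l.length →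
      IsHorton (everyOther l) → IsHorton (everyOther l.tail) →
      (∀ a ∈ everyOther l.tail, ∀ b ∈ everyOther l.tail, a ≠ b →
        ∀ p ∈ everyOther l, BelowLine a b p) →
      (∀ a ∈ everyOther l, ∀ b ∈ everyOther l, a ≠ b →
        ∀ p ∈ everyOther l.tail, AboveLine a b p) →
      IsHorton l

def cross (u v w : ℝ × ℝ) : ℝ :=
  (v.1 - u.1) * (w.2 - u.2) - (v.2 - u.2) * (w.1 - u.1)

lemma aboveLine_iff {u v w : ℝ × ℝ} (h : u.1 < v.1) : AboveLine u v w ↔ 0 < cross u v w := by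
  have hd : 0 < v.1 - u.1 := by linarith
  unfold AboveLine cross
  rw [div_mul_eq_mul_div, ← lt_sub_iff_add_lt', div_lt_iff₀ hd]
  constructor <;> intro h1 <;> nlinarith

lemma belowLine_iff {u v w : ℝ × ℝ} (h : u.1 < v.1) : BelowLine u v w ↔ cross u v w < 0 := by
  have hd : 0 < v.1 - u.1 := by linarith
  unfold BelowLine cross
  rw [div_mul_eq_mul_div, ← sub_lt_iff_lt_add', lt_div_iff₀ hd]
  constructor <;> intro h1 <;> nlinarith

lemma interior_pos {u v a b c p : ℝ × ℝ} (huv : u.1 ≠ v.1)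
    (hA : 0 ≤ cross u v a) (hB : 0 ≤ cross u v b) (hC : 0 ≤ cross u v c)
    (hp : p ∈ interior (convexHull ℝ ({a, b, c} : Set (ℝ × ℝ)))) :
    0 < cross u v p := by
  have hconv : Convex ℝ {w : ℝ × ℝ | 0 ≤ cross u v w} := by
    intro x hx y hy s t hs ht hst
    simp only [Set.mem_setOf_eq] at hx hy ⊢
    have hid : cross u v (s • x + t • y) = s * cross u v x + t * cross u v y := by
      simp only [cross, Prod.fst_add, Prod.snd_add, Prod.smul_fst, Prod.smul_snd, smul_eq_mul]
      linear_combination ((v.1 - u.1) * u.2 - (v.2 - u.2) * u.1) * hst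
    rw [hid]
    nlinarith [mul_nonneg hs hx, mul_nonneg ht hy]
  have hsub : convexHull ℝ ({a, b, c} : Set (ℝ × ℝ)) ⊆ {w | 0 ≤ cross u v w} := by
    apply convexHull_min _ hconv
    intro w hw
    rcases hw with h | h | h <;> simp_all
  obtain ⟨ε, hε, hball⟩ := Metric.isOpen_iff.mp isOpen_interior p hp
  set A : ℝ := v.1 - u.1 with hAdef
  have hA0 : A ≠ 0 := sub_ne_zero_of_ne (Ne.symm huv)
  have hball' : ∀ t : ℝ, |t| < ε → 0 ≤ cross u v p + A * t := by
    intro t ht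
    have hmem : (p.1, p.2 + t) ∈ Metric.ball p ε := by
      rw [Metric.mem_ball, Prod.dist_eq]
      simp [Real.dist_eq]
      exact ht
    have h0 : 0 ≤ cross u v (p.1, p.2 + t) := hsub (interior_subset (hball hmem))
    have he : cross u v (p.1, p.2 + t) = cross u v p + A * t := by
      simp only [cross, hAdef]; ring
    linarith [he ▸ h0]
  rcases lt_trichotomy A 0 with h | h | h
  · have := hball' (ε / 2) (by rw [abs_of_pos (by linarith)]; linarith)
    nlinarith
  · exact absurd h hA0
  · have := hball' (-(ε / 2)) (by rw [abs_neg, abs_of_pos (by linarith)]; linarith)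
    nlinarith


lemma everyOther_get? : ∀ (l : List (ℝ × ℝ)) (j : ℕ), (everyOther l)[j]? = l[2 * j]?
  | [], j => by simp [everyOther]
  | [a], 0 => by simp [everyOther]
  | [a], (j+1) => by simp [everyOther]
  | (a :: b :: t), 0 => by simp [everyOther]
  | (a :: b :: t), (j+1) => by
      have h : 2 * (j + 1) = (2 * j) + 1 + 1 := by ring
      rw [h]
      show (a :: everyOther t)[j+1]? = (a :: b :: t)[2*j+1+1]?
      rw [List.getElem?_cons_succ, List.getElem?_cons_succ, List.getElem?_cons_succ]
      exact everyOther_get? t j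

lemma tail_get? (l : List (ℝ × ℝ)) (n : ℕ) : l.tail[n]? = l[n + 1]? := by
  cases l <;> simp


lemma sortedX_get {l : List (ℝ × ℝ)} (hs : SortedX l) {i j : ℕ} {p q : ℝ × ℝ}
    (hi : l[i]? = some p) (hj : l[j]? = some q) (hij : i < j) : p.1 < q.1 := by
  rw [List.getElem?_eq_some_iff] at hi hj
  obtain ⟨hi1, hi2⟩ := hi
  obtain ⟨hj1, hj2⟩ := hj
  have := List.Pairwise.rel_get_of_lt hs (a := ⟨i, hi1⟩) (b := ⟨j, hj1⟩) (Fin.mk_lt_mk.2 hij)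
  simp only [List.get_eq_getElem] at this
  rwa [hi2, hj2] at this

lemma sortedX_get_ne {l : List (ℝ × ℝ)} (hs : SortedX l) {i j : ℕ} {p q : ℝ × ℝ}
    (hi : l[i]? = some p) (hj : l[j]? = some q) (hij : i ≠ j) : p.1 ≠ q.1 := by
  rcases hij.lt_or_gt with h | h
  · exact (sortedX_get hs hi hj h).ne
  · exact (sortedX_get hs hj hi h).ne'

lemma cross_uvu (u v : ℝ × ℝ) : cross u v u = 0 := by unfold cross; ring
lemma cross_uvv (u v : ℝ × ℝ) : cross u v v = 0 := by unfold cross; ring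
lemma cross_cyc (u v w : ℝ × ℝ) : cross v w u = cross u v w := by unfold cross; ring
lemma cross_swap (u v w : ℝ × ℝ) : cross v u w = -cross u v w := by unfold cross; ring


/-- If `a` and `b` are consecutive points of the odd part `H⁻ = everyOther l` of a
Horton set `l` (their indices in `l` differ by 2), and `c` is any point of the even
part `H⁺ = everyOther l.tail`, then the triangle `a b c` contains no point of `l`
in its interior. -/
theorem horton_consecutive_empty (l : List (ℝ × ℝ)) (hH : IsHorton l)
    (a b c : ℝ × ℝ) (k : ℕ)
    (ha : (everyOther l)[k]? = some a) (hb : (everyOther l)[k + 1]? = some b)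
    (hc : c ∈ everyOther l.tail) :
    ∀ p ∈ l, p ∉ interior (convexHull ℝ ({a, b, c} : Set (ℝ × ℝ))) := by
  intro p hp hmem
  have ha' : l[2 * k]? = some a := by rw [← everyOther_get?]; exact ha
  have hb' : l[2 * k + 2]? = some b := by
    have h := hb
    rw [everyOther_get?, show 2 * (k + 1) = 2 * k + 2 by ring] at h
    exact h
  obtain ⟨m, hm⟩ : ∃ m, l[2 * m + 1]? = some c := by
    obtain ⟨m, hm⟩ := List.mem_iff_getElem?.1 hc
    rw [everyOther_get?, tail_get?] at hm
    exact ⟨m, hm⟩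
  obtain ⟨i, hi⟩ := List.mem_iff_getElem?.1 hp
  cases hH with
  | small _ hlen _ =>
      obtain ⟨h1, -⟩ := List.getElem?_eq_some_iff.1 hb'
      omega
  | step _ hs hlen _ _ hBelow hAbove =>
    have hamem : a ∈ everyOther l := List.mem_of_getElem? ha
    have hbmem : b ∈ everyOther l := List.mem_of_getElem? hb
    have hab : a.1 < b.1 := sortedX_get hs ha' hb' (by omega)
    have habne : a ≠ b := fun h => absurd (congrArg Prod.fst h) hab.ne
    have hXc : 0 < cross a b c := (aboveLine_iff hab).1 (hAbove a hamem b hbmem habne c hc)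
    have hpab : 0 < cross a b p :=
      interior_pos hab.ne (le_of_eq (cross_uvu a b).symm) (le_of_eq (cross_uvv a b).symm)
        hXc.le hmem
    rcases Nat.even_or_odd i with ⟨j, hj⟩ | ⟨j, hj⟩
    · -- p is in the odd part H⁻ (even position in l)
      have hij : i = 2 * j := by omega
      rw [hij] at hi
      have hpmem : p ∈ everyOther l := by
        apply List.mem_of_getElem? (i := j)
        rw [everyOther_get?]; exact hi
      by_cases hjk : j = k
      · subst hjk
        rw [hi] at ha'
        injection ha' with h
        rw [h] at hpab
        rw [cross_uvu] at hpab
        exact lt_irrefl _ hpab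
      by_cases hjk1 : j = k + 1
      · subst hjk1
        rw [show 2 * (k + 1) = 2 * k + 2 by ring] at hi
        rw [hi] at hb'
        injection hb' with h
        rw [h] at hpab
        rw [cross_uvv] at hpab
        exact lt_irrefl _ hpab
      have hcp : c.1 ≠ p.1 := sortedX_get_ne hs hm hi (by omega)
      rcases (by omega : j < k ∨ k + 2 ≤ j) with hlt | hgt
      · have hpa : p.1 < a.1 := sortedX_get hs hi ha' (by omega)
        have hpb : p.1 < b.1 := sortedX_get hs hi hb' (by omega)
        have h1 : 0 < cross p a c := (aboveLine_iff hpa).1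
          (hAbove p hpmem a hamem (fun h => absurd (congrArg Prod.fst h) hpa.ne) c hc)
        have h2 : 0 < cross p b c := (aboveLine_iff hpb).1
          (hAbove p hpmem b hbmem (fun h => absurd (congrArg Prod.fst h) hpb.ne) c hc)
        have h3 : 0 < cross c p p := interior_pos hcp
          (by rw [← cross_cyc]; exact h1.le) (by rw [← cross_cyc]; exact h2.le)
          (le_of_eq (cross_uvu c p).symm) hmem
        rw [cross_uvv] at h3
        exact lt_irrefl _ h3
      · have hap : a.1 < p.1 := sortedX_get hs ha' hi (by omega)
        have hbp : b.1 < p.1 := sortedX_get hs hb' hi (by omega)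
        have h1 : 0 < cross a p c := (aboveLine_iff hap).1
          (hAbove a hamem p hpmem (fun h => absurd (congrArg Prod.fst h) hap.ne) c hc)
        have h2 : 0 < cross b p c := (aboveLine_iff hbp).1
          (hAbove b hbmem p hpmem (fun h => absurd (congrArg Prod.fst h) hbp.ne) c hc)
        have h3 : 0 < cross p c p := interior_pos hcp.symm
          (by rw [cross_cyc]; exact h1.le) (by rw [cross_cyc]; exact h2.le)
          (le_of_eq (cross_uvv p c).symm) hmem
        rw [cross_uvu] at h3
        exact lt_irrefl _ h3
    · -- p is in the even part H⁺ (odd position in l)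
      rw [hj] at hi
      have hpmem2 : p ∈ everyOther l.tail := by
        apply List.mem_of_getElem? (i := j)
        rw [everyOther_get?, tail_get?]; exact hi
      by_cases hjm : j = m
      · subst hjm
        have hbc : b.1 ≠ c.1 := sortedX_get_ne hs hb' hm (by omega)
        rw [hi] at hm
        injection hm with h
        rw [← h] at hbc hXc hmem
        have h3 : 0 < cross b p p := interior_pos hbc
          (by rw [cross_cyc]; exact hXc.le) (le_of_eq (cross_uvu b p).symm)
          (le_of_eq (cross_uvv b p).symm) hmem
        rw [cross_uvv] at h3
        exact lt_irrefl _ h3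
      · have hpc : p.1 ≠ c.1 := sortedX_get_ne hs hi hm (by omega)
        rcases hpc.lt_or_gt with hlt | hgt
        · have hne : p ≠ c := fun h => hpc (congrArg Prod.fst h)
          have h1 : cross p c a < 0 := (belowLine_iff hlt).1 (hBelow p hpmem2 c hc hne a hamem)
          have h2 : cross p c b < 0 := (belowLine_iff hlt).1 (hBelow p hpmem2 c hc hne b hbmem)
          have h3 : 0 < cross c p p := interior_pos hpc.symm
            (by rw [cross_swap]; linarith) (by rw [cross_swap]; linarith)
            (le_of_eq (cross_uvu c p).symm) hmem
          rw [cross_uvv] at h3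
          exact lt_irrefl _ h3
        · have hne : c ≠ p := fun h => hpc (congrArg Prod.fst h).symm
          have h1 : cross c p a < 0 := (belowLine_iff hgt).1 (hBelow c hc p hpmem2 hne a hamem)
          have h2 : cross c p b < 0 := (belowLine_iff hgt).1 (hBelow c hc p hpmem2 hne b hbmem)
          have h3 : 0 < cross p c p := interior_pos hpc
            (by rw [cross_swap]; linarith) (by rw [cross_swap]; linarith)
            (le_of_eq (cross_uvv p c).symm) hmem
          rw [cross_uvu] at h3
          exact lt_irrefl _ h3
end
end

section
/- Every set of 10 points in the plane in general position, colored with 2 colors, contains a monochromatic empty triangle (three same-colored points whose triangle contains no point of the set in its interior). -/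
open scoped Classical

noncomputable section

set_option maxHeartbeats 1600000

/-- signed area / collinearity determinant of the triple `a b c`. -/
def col3 (a b c : ℝ × ℝ) : ℝ := (b.1-a.1)*(c.2-a.2) - (b.2-a.2)*(c.1-a.1)

def tri (a b c : ℝ × ℝ) : Set (ℝ × ℝ) := convexHull ℝ {a, b, c}

lemma col3_rot (a b c : ℝ × ℝ) : col3 a b c = col3 b c a := by unfold col3; ring

lemma col3_swap (a b c : ℝ × ℝ) : col3 a b c = - col3 a c b := by unfold col3; ring

lemma tri_rot (a b c : ℝ × ℝ) : tri a b c = tri b c a := by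
  unfold tri; congr 1; ext z; simp only [Set.mem_insert_iff, Set.mem_singleton_iff]; tauto

lemma tri_swap (a b c : ℝ × ℝ) : tri a b c = tri a c b := by
  unfold tri; congr 1; ext z; simp only [Set.mem_insert_iff, Set.mem_singleton_iff]; tauto

/-- a convex combination of the three vertices lies in the triangle -/
lemma comb_mem_tri {a b c : ℝ × ℝ} {α β γ : ℝ} (ha : 0 ≤ α) (hb : 0 ≤ β) (hc : 0 ≤ γ)
    (h : α + β + γ = 1) : α • a + β • b + γ • c ∈ tri a b c := by
  have hconv := convex_convexHull ℝ ({a, b, c} : Set (ℝ × ℝ))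
  have h1 : a ∈ tri a b c := subset_convexHull ℝ _ (by simp)
  have h2 : b ∈ tri a b c := subset_convexHull ℝ _ (by simp)
  have h3 : c ∈ tri a b c := subset_convexHull ℝ _ (by simp)
  rcases eq_or_lt_of_le (add_nonneg hb hc) with h0 | h0
  · have hb0 : β = 0 := by linarith [hb, hc]
    have hc0 : γ = 0 := by linarith
    have hα : α = 1 := by linarith
    simpa [hb0, hc0, hα] using h1
  · set s := β + γ with hs
    have hmem : (β/s) • b + (γ/s) • c ∈ tri a b c := by
      have := hconv h2 h3 (div_nonneg hb h0.le) (div_nonneg hc h0.le) (by field_simp; exact hs.symm)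
      exact this
    have := hconv h1 hmem ha h0.le (by linarith)
    have hrw : s • ((β/s) • b + (γ/s) • c) = β • b + γ • c := by
      rw [smul_add, smul_smul, smul_smul]
      congr 1 <;> congr 1 <;> field_simp
    rw [hrw, ← add_assoc] at this
    exact this

lemma col3_affine (a b : ℝ × ℝ) : ∃ (F : (ℝ × ℝ) → ℝ) (r : ℝ), IsLinearMap ℝ F ∧
    ∀ q, col3 a b q = F q - r := by
  refine ⟨fun q => (b.1-a.1)*q.2 - (b.2-a.2)*q.1, (b.1-a.1)*a.2 - (b.2-a.2)*a.1, ⟨?_, ?_⟩, ?_⟩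
  · intro p q; simp [Prod.fst_add, Prod.snd_add]; ring
  · intro t q; simp [Prod.smul_fst, Prod.smul_snd, smul_eq_mul]; ring
  · intro q; unfold col3; ring

lemma col3_nonneg_of_mem {a b c q : ℝ × ℝ} (hD : 0 ≤ col3 a b c) (hq : q ∈ tri a b c) :
    0 ≤ col3 a b q := by
  obtain ⟨F, r, hF, hFr⟩ := col3_affine a b
  have : tri a b c ⊆ {q | r ≤ F q} := by
    apply convexHull_min _ (convex_halfSpace_ge hF r)
    intro z hz
    simp only [Set.mem_insert_iff, Set.mem_singleton_iff] at hz
    have goal0 : 0 ≤ col3 a b z := by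
      have e1 : col3 a b a = 0 := by unfold col3; ring
      have e2 : col3 a b b = 0 := by unfold col3; ring
      rcases hz with h | h | h <;> rw [h] <;> linarith
    have := hFr z
    simp only [Set.mem_setOf_eq]
    linarith
  have := this hq
  simp only [Set.mem_setOf_eq] at this
  rw [hFr]; linarith

lemma col3_sum (a b c q : ℝ × ℝ) :
    col3 b c q + col3 c a q + col3 a b q = col3 a b c := by unfold col3; ring

lemma cramer1 (a b c q : ℝ × ℝ) :
    col3 b c q * a.1 + col3 c a q * b.1 + col3 a b q * c.1 = col3 a b c * q.1 := by
  unfold col3; ring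

lemma cramer2 (a b c q : ℝ × ℝ) :
    col3 b c q * a.2 + col3 c a q * b.2 + col3 a b q * c.2 = col3 a b c * q.2 := by
  unfold col3; ring

lemma mem_tri_of_col3 {a b c q : ℝ × ℝ} (hD : 0 < col3 a b c)
    (h1 : 0 ≤ col3 b c q) (h2 : 0 ≤ col3 c a q) (h3 : 0 ≤ col3 a b q) :
    q ∈ tri a b c := by
  set D := col3 a b c with hDdef
  have hsum : col3 b c q + col3 c a q + col3 a b q = D := col3_sum a b c q
  have key : (col3 b c q / D) • a + (col3 c a q / D) • b + (col3 a b q / D) • c = q := by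
    have hne : D ≠ 0 := ne_of_gt hD
    apply Prod.ext
    · simp only [Prod.fst_add, Prod.smul_fst, smul_eq_mul]
      field_simp
      have := cramer1 a b c q
      linarith
    · simp only [Prod.snd_add, Prod.smul_snd, smul_eq_mul]
      field_simp
      have := cramer2 a b c q
      linarith
  rw [← key]
  exact comb_mem_tri (div_nonneg h1 hD.le) (div_nonneg h2 hD.le) (div_nonneg h3 hD.le)
    (by field_simp; linarith)

lemma perturb {T : Set (ℝ × ℝ)} {q w : ℝ × ℝ} (hq : q ∈ interior T) (hw : w ≠ 0) :
    ∃ q' ∈ T, col3 q (q + w) q' < 0 := by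
  rw [mem_interior_iff_mem_nhds, Metric.mem_nhds_iff] at hq
  obtain ⟨ε, hε, hball⟩ := hq
  set h : ℝ × ℝ := (w.2, -w.1) with hh
  have hn : (0:ℝ) < w.1^2 + w.2^2 := by
    have hno : ¬ (w.1 = 0 ∧ w.2 = 0) := by
      rintro ⟨h1, h2⟩; exact hw (Prod.ext h1 h2)
    rcases not_and_or.mp hno with h | h
    · have h2 : w.1^2 ≠ 0 := pow_ne_zero 2 h
      nlinarith [sq_nonneg w.1, sq_nonneg w.2, lt_of_le_of_ne (sq_nonneg w.1) (Ne.symm h2)]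
    · have h2 : w.2^2 ≠ 0 := pow_ne_zero 2 h
      nlinarith [sq_nonneg w.1, sq_nonneg w.2, lt_of_le_of_ne (sq_nonneg w.2) (Ne.symm h2)]
  set δ : ℝ := ε / (2 * (‖h‖ + 1)) with hδ
  have hδpos : 0 < δ := by
    apply div_pos hε
    positivity
  refine ⟨q + δ • h, ?_, ?_⟩
  · apply hball
    simp only [Metric.mem_ball, dist_eq_norm, add_sub_cancel_left, norm_smul]
    have h1 : ‖δ • h‖ = |δ| * ‖h‖ := norm_smul δ h
    rw [Real.norm_eq_abs, abs_of_pos hδpos]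
    have : ‖h‖ < ‖h‖ + 1 := by linarith
    have hb1 : δ * ‖h‖ ≤ δ * (‖h‖ + 1) := by nlinarith [norm_nonneg h]
    have hb2 : δ * (‖h‖ + 1) = ε / 2 := by
      rw [hδ]; field_simp
    linarith
  · show col3 q (q + w) (q + δ • h) < 0
    have : col3 q (q + w) (q + δ • h) = -δ * (w.1^2 + w.2^2) := by
      unfold col3
      simp only [Prod.fst_add, Prod.snd_add, Prod.smul_fst, Prod.smul_snd, smul_eq_mul, hh]
      ring
    rw [this]
    nlinarith

lemma col3_pos_of_interior₁ {a b c q : ℝ × ℝ} (hD : 0 ≤ col3 a b c) (hab : a ≠ b)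
    (hq : q ∈ interior (tri a b c)) : 0 < col3 a b q := by
  have hmem : q ∈ tri a b c := interior_subset hq
  have hge : 0 ≤ col3 a b q := col3_nonneg_of_mem hD hmem
  rcases eq_or_lt_of_le hge with heq | h
  · exfalso
    have hwne : b - a ≠ 0 := sub_ne_zero.mpr (Ne.symm hab)
    obtain ⟨q', hq', hlt⟩ := perturb hq hwne
    have hid : col3 q (q + (b-a)) q' = col3 a b q' - col3 a b q := by unfold col3; simp; ring
    have : 0 ≤ col3 a b q' := col3_nonneg_of_mem hD hq'
    rw [hid] at hlt
    linarith
  · exact h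

lemma ne12_of_col3 {a b c : ℝ × ℝ} (hD : col3 a b c ≠ 0) : a ≠ b := by
  rintro rfl; apply hD; unfold col3; ring

lemma interior_tri_pos {a b c q : ℝ × ℝ} (hD : 0 < col3 a b c)
    (hq : q ∈ interior (tri a b c)) :
    0 < col3 b c q ∧ 0 < col3 c a q ∧ 0 < col3 a b q := by
  have hab : a ≠ b := ne12_of_col3 (ne_of_gt hD)
  have hbc : b ≠ c := by
    have : col3 b c a ≠ 0 := by rw [← col3_rot]; exact ne_of_gt hD
    exact ne12_of_col3 this
  have hca : c ≠ a := by
    have : col3 c a b ≠ 0 := by rw [← col3_rot, ← col3_rot]; exact ne_of_gt hD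
    exact ne12_of_col3 this
  refine ⟨?_, ?_, ?_⟩
  · have hq' : q ∈ interior (tri b c a) := by rw [← tri_rot]; exact hq
    exact col3_pos_of_interior₁ (le_of_lt (by rw [← col3_rot]; exact hD)) hbc hq'
  · have hq' : q ∈ interior (tri c a b) := by rw [← tri_rot, ← tri_rot]; exact hq
    exact col3_pos_of_interior₁ (le_of_lt (by rw [← col3_rot, ← col3_rot]; exact hD)) hca hq'
  · exact col3_pos_of_interior₁ hD.le hab hq

lemma col3_continuous (a b : ℝ × ℝ) : Continuous (fun q : ℝ × ℝ => col3 a b q) := by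
  unfold col3
  fun_prop

lemma interior_tri_of_pos {a b c q : ℝ × ℝ} (hD : 0 < col3 a b c)
    (h1 : 0 < col3 b c q) (h2 : 0 < col3 c a q) (h3 : 0 < col3 a b q) :
    q ∈ interior (tri a b c) := by
  set U : Set (ℝ × ℝ) := {z | 0 < col3 b c z ∧ 0 < col3 c a z ∧ 0 < col3 a b z} with hU
  have hopen : IsOpen U := by
    have o1 : IsOpen {z : ℝ × ℝ | 0 < col3 b c z} :=
      isOpen_lt continuous_const (col3_continuous b c)
    have o2 : IsOpen {z : ℝ × ℝ | 0 < col3 c a z} :=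
      isOpen_lt continuous_const (col3_continuous c a)
    have o3 : IsOpen {z : ℝ × ℝ | 0 < col3 a b z} :=
      isOpen_lt continuous_const (col3_continuous a b)
    exact IsOpen.inter o1 (IsOpen.inter o2 o3)
  have hsub : U ⊆ tri a b c := by
    rintro z ⟨hz1, hz2, hz3⟩
    exact mem_tri_of_col3 hD hz1.le hz2.le hz3.le
  exact interior_maximal hsub hopen ⟨h1, h2, h3⟩

lemma mem_tri_iff_col3 {a b c q : ℝ × ℝ} (hD : 0 < col3 a b c) :
    q ∈ tri a b c ↔ 0 ≤ col3 b c q ∧ 0 ≤ col3 c a q ∧ 0 ≤ col3 a b q := by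
  constructor
  · intro hq
    refine ⟨?_, ?_, ?_⟩
    · exact col3_nonneg_of_mem (le_of_lt (by rw [← col3_rot]; exact hD))
        (by rw [← tri_rot]; exact hq)
    · exact col3_nonneg_of_mem (le_of_lt (by rw [← col3_rot, ← col3_rot]; exact hD))
        (by rw [← tri_rot, ← tri_rot]; exact hq)
    · exact col3_nonneg_of_mem hD.le hq
  · rintro ⟨h1, h2, h3⟩
    exact mem_tri_of_col3 hD h1 h2 h3

lemma vertex_not_mem_interior₁ {a b c : ℝ × ℝ} (hD : col3 a b c ≠ 0) :
    a ∉ interior (tri a b c) := by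
  intro hmem
  rcases lt_or_gt_of_ne hD with h | h
  · have hD' : 0 < col3 a c b := by
      have := col3_swap a b c; linarith
    have hmem' : a ∈ interior (tri a c b) := by rw [← tri_swap]; exact hmem
    have := (interior_tri_pos hD' hmem').2.2
    have : col3 a c a = 0 := by unfold col3; ring
    linarith [(interior_tri_pos hD' hmem').2.2]
  · have := (interior_tri_pos h hmem).2.2
    have h0 : col3 a b a = 0 := by unfold col3; ring
    linarith

lemma vertex_not_mem_interior {a b c z : ℝ × ℝ} (hD : col3 a b c ≠ 0)
    (hz : z = a ∨ z = b ∨ z = c) : z ∉ interior (tri a b c) := by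
  intro hmem
  rcases hz with h | h | h <;> rw [h] at hmem
  · exact vertex_not_mem_interior₁ hD hmem
  · have hD' : col3 b c a ≠ 0 := by rw [← col3_rot]; exact hD
    rw [tri_rot] at hmem
    exact vertex_not_mem_interior₁ hD' hmem
  · have hD' : col3 c a b ≠ 0 := by rw [← col3_rot, ← col3_rot]; exact hD
    rw [tri_rot, tri_rot] at hmem
    exact vertex_not_mem_interior₁ hD' hmem

lemma col3_swap12 (a b c : ℝ × ℝ) : col3 a b c = - col3 b a c := by unfold col3; ring

lemma collinear_of_col3_eq_zero {a b x : ℝ × ℝ} (hab : a ≠ b) (h : col3 a b x = 0) :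
    Collinear ℝ ({a, b, x} : Set (ℝ × ℝ)) := by
  have hmem : a ∈ ({a, b, x} : Set (ℝ × ℝ)) := by simp
  rw [collinear_iff_of_mem hmem]
  refine ⟨b - a, ?_⟩
  intro p hp
  simp only [Set.mem_insert_iff, Set.mem_singleton_iff] at hp
  have hba : b - a ≠ 0 := sub_ne_zero.mpr (Ne.symm hab)
  rcases hp with h' | h' | h'
  · exact ⟨0, by simp [vadd_eq_add, h']⟩
  · refine ⟨1, ?_⟩; simp [vadd_eq_add, h']
  · subst h'
    by_cases hx : (b - a).1 ≠ 0
    · refine ⟨(p.1 - a.1) / (b.1 - a.1), ?_⟩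
      have hx' : b.1 - a.1 ≠ 0 := by simpa using hx
      apply Prod.ext
      · simp only [vadd_eq_add, Prod.fst_add, Prod.smul_fst, Prod.fst_sub, smul_eq_mul]
        field_simp
        ring
      · simp only [vadd_eq_add, Prod.snd_add, Prod.smul_snd, Prod.snd_sub, smul_eq_mul]
        unfold col3 at h
        field_simp
        nlinarith [h]
    · push_neg at hx
      have hx1 : b.1 - a.1 = 0 := by simpa using hx
      have hy : b.2 - a.2 ≠ 0 := by
        intro h0
        apply hba
        have : b.1 = a.1 := by linarith
        have h2 : b.2 = a.2 := by linarith
        apply Prod.ext <;> simp [Prod.fst_sub, Prod.snd_sub, this, h2]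
      refine ⟨(p.2 - a.2) / (b.2 - a.2), ?_⟩
      apply Prod.ext
      · simp only [vadd_eq_add, Prod.fst_add, Prod.smul_fst, Prod.fst_sub, smul_eq_mul]
        unfold col3 at h
        have : (b.1 - a.1) * (p.2 - a.2) - (b.2 - a.2) * (p.1 - a.1) = 0 := h
        rw [hx1] at this
        have : (b.2 - a.2) * (p.1 - a.1) = 0 := by linarith
        have hp1 : p.1 - a.1 = 0 := by
          rcases mul_eq_zero.mp this with h' | h'
          · exact absurd h' hy
          · exact h'
        field_simp [hx1]
        linarith
      · simp only [vadd_eq_add, Prod.snd_add, Prod.smul_snd, Prod.snd_sub, smul_eq_mul]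
        field_simp
        ring

lemma mem_interior_of_mem_tri {a b c q : ℝ × ℝ} (hD : col3 a b c ≠ 0) (hq : q ∈ tri a b c)
    (h1 : col3 b c q ≠ 0) (h2 : col3 c a q ≠ 0) (h3 : col3 a b q ≠ 0) :
    q ∈ interior (tri a b c) := by
  rcases lt_or_gt_of_ne hD with hneg | hpos
  · have hD' : 0 < col3 a c b := by have := col3_swap a b c; linarith
    rw [tri_swap] at hq ⊢
    obtain ⟨k1, k2, k3⟩ := (mem_tri_iff_col3 hD').mp hq
    apply interior_tri_of_pos hD'
    · exact lt_of_le_of_ne k1 (by rw [col3_swap12]; simpa using (neg_ne_zero.mpr h1).symm)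
    · exact lt_of_le_of_ne k2 (by rw [col3_swap12]; simpa using (neg_ne_zero.mpr h3).symm)
    · exact lt_of_le_of_ne k3 (by rw [col3_swap12]; simpa using (neg_ne_zero.mpr h2).symm)
  · obtain ⟨k1, k2, k3⟩ := (mem_tri_iff_col3 hpos).mp hq
    exact interior_tri_of_pos hpos (lt_of_le_of_ne k1 (Ne.symm h1))
      (lt_of_le_of_ne k2 (Ne.symm h2)) (lt_of_le_of_ne k3 (Ne.symm h3))

lemma tri_subset_hull {a b c : ℝ × ℝ} {M : Set (ℝ × ℝ)} (ha : a ∈ M) (hb : b ∈ M)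
    (hc : c ∈ M) : tri a b c ⊆ convexHull ℝ M := by
  apply convexHull_mono
  intro z hz
  simp only [Set.mem_insert_iff, Set.mem_singleton_iff] at hz
  rcases hz with h | h | h <;> rw [h] <;> assumption

lemma tri_subset_convex {a b c : ℝ × ℝ} {C : Set (ℝ × ℝ)} (hC : Convex ℝ C) (ha : a ∈ C)
    (hb : b ∈ C) (hc : c ∈ C) : tri a b c ⊆ C := by
  apply convexHull_min _ hC
  intro z hz
  simp only [Set.mem_insert_iff, Set.mem_singleton_iff] at hz
  rcases hz with h | h | h <;> rw [h] <;> assumption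

/-- general position for a finset -/
def GPd (P : Finset (ℝ × ℝ)) : Prop :=
  ∀ a ∈ P, ∀ b ∈ P, ∀ c ∈ P, a ≠ b → a ≠ c → b ≠ c → col3 a b c ≠ 0

lemma GPd.mono {P Q : Finset (ℝ × ℝ)} (h : GPd Q) (hPQ : P ⊆ Q) : GPd P :=
  fun a ha b hb c hc h1 h2 h3 => h a (hPQ ha) b (hPQ hb) c (hPQ hc) h1 h2 h3

def intPts (P : Finset (ℝ × ℝ)) : Finset (ℝ × ℝ) :=
  P.filter (fun z => z ∈ interior (convexHull ℝ (P : Set (ℝ × ℝ))))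

def ctri (T : (ℝ × ℝ) × (ℝ × ℝ) × (ℝ × ℝ)) : Set (ℝ × ℝ) := tri T.1 T.2.1 T.2.2

def itri (T : (ℝ × ℝ) × (ℝ × ℝ) × (ℝ × ℝ)) : Set (ℝ × ℝ) := interior (ctri T)

def goodFam (P : Finset (ℝ × ℝ)) (F : Finset ((ℝ × ℝ) × (ℝ × ℝ) × (ℝ × ℝ))) : Prop :=
  (∀ T ∈ F, (T.1 ∈ P ∧ T.2.1 ∈ P ∧ T.2.2 ∈ P) ∧
    (T.1 ≠ T.2.1 ∧ T.1 ≠ T.2.2 ∧ T.2.1 ≠ T.2.2)) ∧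
  (∀ T ∈ F, ∀ z ∈ P, z ∉ itri T) ∧
  (∀ T ∈ F, ∀ T' ∈ F, T ≠ T' → itri T ∩ itri T' = ∅) ∧
  (convexHull ℝ (P : Set (ℝ × ℝ)) ⊆ ⋃ T ∈ F, ctri T)

lemma ctri_subset_hull {P : Finset (ℝ × ℝ)} {T : (ℝ × ℝ) × (ℝ × ℝ) × (ℝ × ℝ)}
    (h1 : T.1 ∈ P) (h2 : T.2.1 ∈ P) (h3 : T.2.2 ∈ P) :
    ctri T ⊆ convexHull ℝ (P : Set (ℝ × ℝ)) :=
  tri_subset_hull h1 h2 h3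

lemma itri_subset_int_hull {P : Finset (ℝ × ℝ)} {T : (ℝ × ℝ) × (ℝ × ℝ) × (ℝ × ℝ)}
    (h1 : T.1 ∈ P) (h2 : T.2.1 ∈ P) (h3 : T.2.2 ∈ P) :
    itri T ⊆ interior (convexHull ℝ (P : Set (ℝ × ℝ))) :=
  interior_mono (ctri_subset_hull h1 h2 h3)

/-- a linear functional injective on a finite set of points -/
lemma exists_generic (P : Finset (ℝ × ℝ)) :
    ∃ t : ℝ, ∀ a ∈ P, ∀ b ∈ P, a ≠ b → (a.1 - b.1) + t * (a.2 - b.2) ≠ 0 := by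
  classical
  set B : Finset ℝ := (P ×ˢ P).image (fun pr => -(pr.1.1 - pr.2.1) / (pr.1.2 - pr.2.2)) with hB
  obtain ⟨t, ht⟩ := Infinite.exists_notMem_finset B
  refine ⟨t, ?_⟩
  intro a ha b hb hab h
  by_cases h2 : a.2 - b.2 = 0
  · have h1 : a.1 - b.1 = 0 := by rw [h2] at h; linarith [h]
    apply hab
    apply Prod.ext <;> [skip; skip] <;> [linarith; linarith]
  · apply ht
    rw [hB]
    apply Finset.mem_image.mpr
    refine ⟨(a, b), Finset.mem_product.mpr ⟨ha, hb⟩, ?_⟩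
    field_simp
    linarith

lemma col3_seg (a b v q : ℝ × ℝ) (s : ℝ) :
    col3 a b (v + s • (q - v)) = (1-s) * col3 a b v + s * col3 a b q := by
  unfold col3
  simp only [Prod.fst_add, Prod.snd_add, Prod.smul_fst, Prod.smul_snd, Prod.fst_sub,
    Prod.snd_sub, smul_eq_mul]
  ring

lemma exists_smul_of_cross_eq_zero {p q : ℝ × ℝ} (hp : p ≠ 0)
    (h : p.1 * q.2 - p.2 * q.1 = 0) : ∃ l : ℝ, q = l • p := by
  by_cases h1 : p.1 ≠ 0
  · refine ⟨q.1 / p.1, ?_⟩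
    apply Prod.ext
    · simp only [Prod.smul_fst, smul_eq_mul]; field_simp
    · simp only [Prod.smul_snd, smul_eq_mul]; field_simp; nlinarith
  · push_neg at h1
    have h2 : p.2 ≠ 0 := by
      intro h2; exact hp (Prod.ext h1 h2)
    refine ⟨q.2 / p.2, ?_⟩
    apply Prod.ext
    · simp only [Prod.smul_fst, smul_eq_mul]
      have hq1 : q.1 = 0 := by
        have h' : p.2 * q.1 = 0 := by rw [h1] at h; linarith
        rcases mul_eq_zero.mp h' with h'' | h''
        · exact absurd h'' h2
        · exact h''
      rw [h1, hq1]; ring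
    · simp only [Prod.smul_snd, smul_eq_mul]; field_simp

lemma mem_segment_param {x y q : ℝ × ℝ} {θ : ℝ} (h0 : 0 ≤ θ) (h1 : θ ≤ 1)
    (h : q = x + θ • (y - x)) : q ∈ segment ℝ x y := by
  rw [segment_eq_image']
  exact ⟨θ, ⟨h0, h1⟩, h.symm⟩

lemma hull_halfplane_le {P : Finset (ℝ × ℝ)} {a b : ℝ × ℝ}
    (h : ∀ z ∈ P, col3 a b z ≤ 0) :
    convexHull ℝ (P : Set (ℝ × ℝ)) ⊆ {z | col3 a b z ≤ 0} := by
  obtain ⟨F, r, hF, hFr⟩ := col3_affine a b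
  have heq : {z : ℝ × ℝ | col3 a b z ≤ 0} = {z | F z ≤ r} := by
    ext z; simp only [Set.mem_setOf_eq, hFr]; constructor <;> intro <;> linarith
  rw [heq]
  apply convexHull_min _ (convex_halfSpace_le hF r)
  intro z hz
  have := h z (by exact_mod_cast hz)
  simp only [Set.mem_setOf_eq]
  have := hFr z
  linarith

lemma hull_halfplane_ge {P : Finset (ℝ × ℝ)} {a b : ℝ × ℝ}
    (h : ∀ z ∈ P, 0 ≤ col3 a b z) :
    convexHull ℝ (P : Set (ℝ × ℝ)) ⊆ {z | 0 ≤ col3 a b z} := by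
  obtain ⟨F, r, hF, hFr⟩ := col3_affine a b
  have heq : {z : ℝ × ℝ | 0 ≤ col3 a b z} = {z | r ≤ F z} := by
    ext z; simp only [Set.mem_setOf_eq, hFr]; constructor <;> intro <;> linarith
  rw [heq]
  apply convexHull_min _ (convex_halfSpace_ge hF r)
  intro z hz
  have := h z (by exact_mod_cast hz)
  simp only [Set.mem_setOf_eq]
  have := hFr z
  linarith

lemma convexFan (m : ℕ) : ∀ P : Finset (ℝ × ℝ), GPd P → 3 ≤ P.card → P.card = m →
    intPts P = ∅ → ∃ F, goodFam P F ∧ P.card - 2 ≤ F.card := by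
  induction m using Nat.strong_induction_on with
  | _ m ih =>
  intro P hgp h3 hm hint
  by_cases hm3 : P.card = 3
  · -- base case : a single triangle
    obtain ⟨a, b, c, hab, hac, hbc, hPeq⟩ := Finset.card_eq_three.mp hm3
    have hamem : a ∈ P := by rw [hPeq]; simp
    have hbmem : b ∈ P := by rw [hPeq]; simp
    have hcmem : c ∈ P := by rw [hPeq]; simp
    have hD : col3 a b c ≠ 0 := hgp a hamem b hbmem c hcmem hab hac hbc
    refine ⟨{(a, b, c)}, ⟨?_, ?_, ?_, ?_⟩, ?_⟩
    · intro T hT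
      rw [Finset.mem_singleton] at hT
      subst hT
      exact ⟨⟨hamem, hbmem, hcmem⟩, hab, hac, hbc⟩
    · intro T hT z hz
      rw [Finset.mem_singleton] at hT
      subst hT
      rw [hPeq] at hz
      simp only [Finset.mem_insert, Finset.mem_singleton] at hz
      exact vertex_not_mem_interior hD hz
    · intro T hT T' hT' hne
      rw [Finset.mem_singleton] at hT hT'
      exact absurd (hT.trans hT'.symm) hne
    · intro q hq
      apply Set.mem_iUnion₂.mpr
      refine ⟨(a, b, c), Finset.mem_singleton_self _, ?_⟩
      show q ∈ tri a b c
      rw [hPeq] at hq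
      simpa [tri] using hq
    · simp [hm3]
  · -- inductive step : m ≥ 4
    have hm4 : 4 ≤ m := by omega
    obtain ⟨t, ht⟩ := exists_generic P
    set fc : ℝ × ℝ → ℝ := fun z => z.1 + t * z.2 with hfc
    set gc : ℝ × ℝ → ℝ := fun z => z.2 - t * z.1 with hgc
    have hPne : P.Nonempty := Finset.card_pos.mp (by omega)
    obtain ⟨v, hv, hvmin⟩ := Finset.exists_min_image P fc hPne
    set P' := P.erase v with hP'
    have hP'card : P'.card = m - 1 := by
      rw [hP', Finset.card_erase_of_mem hv, hm]
    have hP'sub : P' ⊆ P := Finset.erase_subset v P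
    have hP'mem : ∀ z ∈ P', z ∈ P ∧ z ≠ v := by
      intro z hz
      exact ⟨hP'sub hz, Finset.ne_of_mem_erase hz⟩
    have hfpos : ∀ z ∈ P', 0 < fc z - fc v := by
      intro z hz
      obtain ⟨hzP, hzv⟩ := hP'mem z hz
      have h1 : fc v ≤ fc z := hvmin z hzP
      have h2 : fc z ≠ fc v := by
        intro he
        apply ht z hzP v hv hzv
        simp only [hfc] at he
        linarith [he]
      rcases lt_or_eq_of_le h1 with h | h
      · linarith
      · exact absurd h.symm h2
    -- the slope function
    set κ : ℝ × ℝ → ℝ := fun z => (gc z - gc v) / (fc z - fc v) with hκ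
    have hkey : ∀ z z' : ℝ × ℝ, (fc z - fc v) * (gc z' - gc v) - (gc z - gc v) * (fc z' - fc v)
        = (1 + t^2) * col3 v z z' := by
      intro z z'
      simp only [hfc, hgc]
      unfold col3
      ring
    have hcmp : ∀ z ∈ P', ∀ z' ∈ P', (κ z < κ z' ↔ 0 < col3 v z z') := by
      intro z hz z' hz'
      have h1 := hfpos z hz
      have h2 := hfpos z' hz'
      rw [hκ]
      simp only
      rw [div_lt_div_iff₀ h1 h2]
      have := hkey z z'
      constructor
      · intro h; nlinarith [this]
      · intro h; nlinarith [this, sq_nonneg t]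
    have hinj : ∀ z ∈ P', ∀ z' ∈ P', z ≠ z' → κ z ≠ κ z' := by
      intro z hz z' hz' hne he
      obtain ⟨hzP, hzv⟩ := hP'mem z hz
      obtain ⟨hz'P, hz'v⟩ := hP'mem z' hz'
      have hc : col3 v z z' ≠ 0 := hgp v hv z hzP z' hz'P (Ne.symm hzv) (Ne.symm hz'v) hne
      rcases lt_or_gt_of_ne hc with h | h
      · have : κ z' < κ z := by
          rw [hcmp z' hz' z hz]
          have : col3 v z' z = - col3 v z z' := by
            rw [col3_swap]
          linarith
        linarith [he.le]
      · have := (hcmp z hz z' hz').mpr h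
        linarith [he.ge]
    have hP'ne : P'.Nonempty := Finset.card_pos.mp (by omega)
    obtain ⟨u, hu, humin⟩ := Finset.exists_min_image P' κ hP'ne
    obtain ⟨w, hw, hwmax⟩ := Finset.exists_max_image P' κ hP'ne
    obtain ⟨huP, huv⟩ := hP'mem u hu
    obtain ⟨hwP, hwv⟩ := hP'mem w hw
    have huw : u ≠ w := by
      intro he
      -- then κ is constant on P', contradicting two distinct points
      obtain ⟨z1, hz1, z2, hz2, hz12⟩ := Finset.one_lt_card.mp (show 1 < P'.card by omega)
      have e1 : κ z1 = κ u := le_antisymm (he ▸ hwmax z1 hz1) (humin z1 hz1)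
      have e2 : κ z2 = κ u := le_antisymm (he ▸ hwmax z2 hz2) (humin z2 hz2)
      exact hinj z1 hz1 z2 hz2 hz12 (e1.trans e2.symm)
    have hW : 0 < col3 v u w := by
      rw [← hcmp u hu w hw]
      rcases lt_or_eq_of_le (humin w hw) with h | h
      · exact h
      · exact absurd h (hinj u hu w hw huw)
    -- wedge bounds for all points of P'
    have hwedge1 : ∀ z ∈ P', z ≠ u → 0 < col3 v u z := by
      intro z hz hzu
      rw [← hcmp u hu z hz]
      rcases lt_or_eq_of_le (humin z hz) with h | h
      · exact h
      · exact absurd h.symm (hinj z hz u hu hzu)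
    have hwedge2 : ∀ z ∈ P', z ≠ w → 0 < col3 v z w := by
      intro z hz hzw
      rw [← hcmp z hz w hw]
      rcases lt_or_eq_of_le (hwmax z hz) with h | h
      · exact h
      · exact absurd h (hinj z hz w hw hzw)
    -- all other points of P' are strictly outside the chord
    have hchord : ∀ z ∈ P', z ≠ u → z ≠ w → col3 u w z < 0 := by
      intro z hz hzu hzw
      obtain ⟨hzP, hzv⟩ := hP'mem z hz
      by_contra hcon
      push_neg at hcon
      have hne : col3 u w z ≠ 0 := hgp u huP w hwP z hzP huw (Ne.symm hzu) (Ne.symm hzw)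
      have hpos : 0 < col3 u w z := lt_of_le_of_ne hcon (Ne.symm hne)
      have hzint : z ∈ interior (tri v u w) := by
        apply interior_tri_of_pos hW hpos
        · have h1 : 0 < col3 v z w := hwedge2 z hz hzw
          have : col3 w v z = col3 v z w := by rw [col3_rot]
          linarith
        · exact hwedge1 z hz hzu
      have : z ∈ intPts P := by
        rw [intPts, Finset.mem_filter]
        refine ⟨hzP, ?_⟩
        exact (itri_subset_int_hull (T := (v,u,w)) hv huP hwP) hzint
      rw [hint] at this
      exact absurd this (Finset.notMem_empty z)
    -- halfplane bounds for the convex hull of P'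
    have hHσ : convexHull ℝ (P' : Set (ℝ × ℝ)) ⊆ {z | col3 u w z ≤ 0} := by
      apply hull_halfplane_le
      intro z hz
      by_cases hzu : z = u
      · rw [hzu]; have : col3 u w u = 0 := by unfold col3; ring
        linarith
      by_cases hzw : z = w
      · rw [hzw]; have : col3 u w w = 0 := by unfold col3; ring
        linarith
      exact (hchord z hz hzu hzw).le
    have hHw1 : convexHull ℝ (P' : Set (ℝ × ℝ)) ⊆ {z | 0 ≤ col3 v u z} := by
      apply hull_halfplane_ge
      intro z hz
      by_cases hzu : z = u
      · rw [hzu]; have : col3 v u u = 0 := by unfold col3; ring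
        linarith
      exact (hwedge1 z hz hzu).le
    have hHw2 : convexHull ℝ (P' : Set (ℝ × ℝ)) ⊆ {z | col3 v w z ≤ 0} := by
      apply hull_halfplane_le
      intro z hz
      by_cases hzw : z = w
      · rw [hzw]; have : col3 v w w = 0 := by unfold col3; ring
        linarith
      have h1 : 0 < col3 v z w := hwedge2 z hz hzw
      have : col3 v w z = - col3 v z w := by rw [col3_swap]
      linarith
    -- recursion
    have hgp' : GPd P' := hgp.mono hP'sub
    have hint' : intPts P' = ∅ := by
      rw [Finset.eq_empty_iff_forall_notMem]
      intro z hz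
      rw [intPts, Finset.mem_filter] at hz
      obtain ⟨hz1, hz2⟩ := hz
      have : z ∈ intPts P := by
        rw [intPts, Finset.mem_filter]
        refine ⟨hP'sub hz1, ?_⟩
        have : interior (convexHull ℝ (P' : Set (ℝ × ℝ))) ⊆
            interior (convexHull ℝ (P : Set (ℝ × ℝ))) :=
          interior_mono (convexHull_mono (by exact_mod_cast hP'sub))
        exact this hz2
      rw [hint] at this
      exact absurd this (Finset.notMem_empty z)
    obtain ⟨F', hF', hF'card⟩ := ih (m-1) (by omega) P' hgp' (by omega) hP'card hint'
    obtain ⟨hF'v, hF'e, hF'd, hF'cov⟩ := hF'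
    -- new family
    have hnotin : (v, u, w) ∉ F' := by
      intro hmem
      have := (hF'v _ hmem).1.1
      simp only at this
      exact (hP'mem v this).2 rfl
    refine ⟨insert (v, u, w) F', ⟨?_, ?_, ?_, ?_⟩, ?_⟩
    · intro T hT
      rcases Finset.mem_insert.mp hT with h | h
      · subst h
        exact ⟨⟨hv, huP, hwP⟩, Ne.symm huv, Ne.symm hwv, huw⟩
      · obtain ⟨⟨k1, k2, k3⟩, k4⟩ := hF'v T h
        exact ⟨⟨hP'sub k1, hP'sub k2, hP'sub k3⟩, k4⟩
    · intro T hT z hz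
      rcases Finset.mem_insert.mp hT with h | h
      · subst h
        intro hzint
        have hstrict := interior_tri_pos hW hzint
        by_cases hzv : z = v
        · rw [hzv] at hstrict
          have : col3 v u v = 0 := by unfold col3; ring
          linarith [hstrict.2.2]
        · have hzP' : z ∈ P' := Finset.mem_erase.mpr ⟨hzv, hz⟩
          by_cases hzu : z = u
          · rw [hzu] at hstrict
            have : col3 v u u = 0 := by unfold col3; ring
            linarith [hstrict.2.2]
          by_cases hzw : z = w
          · rw [hzw] at hstrict
            have : col3 u w w = 0 := by unfold col3; ring
            linarith [hstrict.1]
          · linarith [hchord z hzP' hzu hzw, hstrict.1]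
      · by_cases hzv : z = v
        · intro hzint
          have h1 : itri T ⊆ convexHull ℝ (P' : Set (ℝ × ℝ)) := by
            intro y hy
            have hy' : y ∈ ctri T := interior_subset hy
            exact ctri_subset_hull (hF'v T h).1.1 (hF'v T h).1.2.1 (hF'v T h).1.2.2 hy'
          have h2 := hHσ (h1 hzint)
          simp only [Set.mem_setOf_eq] at h2
          have hσv : col3 u w z = col3 z u w := by rw [col3_rot, col3_rot]
          rw [hσv, hzv] at h2
          linarith
        · exact hF'e T h z (Finset.mem_erase.mpr ⟨hzv, hz⟩)
    · intro T hT T' hT' hne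
      have key : ∀ T'' ∈ F', itri (v, u, w) ∩ itri T'' = ∅ := by
        intro T'' hT''
        rw [Set.eq_empty_iff_forall_notMem]
        rintro x ⟨hx1, hx2⟩
        have hstrict := interior_tri_pos hW hx1
        have h1 : itri T'' ⊆ convexHull ℝ (P' : Set (ℝ × ℝ)) := by
          intro y hy
          exact ctri_subset_hull (hF'v T'' hT'').1.1 (hF'v T'' hT'').1.2.1
            (hF'v T'' hT'').1.2.2 (interior_subset hy)
        have := hHσ (h1 hx2)
        simp only [Set.mem_setOf_eq] at this
        linarith [hstrict.1]
      rcases Finset.mem_insert.mp hT with h | h <;> rcases Finset.mem_insert.mp hT' with h' | h'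
      · exact absurd (h.trans h'.symm) hne
      · subst h; exact key T' h'
      · subst h'
        rw [Set.inter_comm]
        exact key T h
      · exact hF'd T h T' h' hne
    · -- covering
      intro q hq
      have hPcoe : (P : Set (ℝ × ℝ)) = insert v (P' : Set (ℝ × ℝ)) := by
        rw [hP', Finset.coe_erase]
        ext z
        simp only [Set.mem_insert_iff, Set.mem_diff, Set.mem_singleton_iff]
        constructor
        · intro hz
          by_cases hzv : z = v
          · exact Or.inl hzv
          · exact Or.inr ⟨hz, hzv⟩
        · rintro (rfl | ⟨hz, _⟩)
          · exact_mod_cast hv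
          · exact hz
      rw [hPcoe] at hq
      have hP'coene : (P' : Set (ℝ × ℝ)).Nonempty := by
        obtain ⟨z, hz⟩ := hP'ne
        exact ⟨z, by exact_mod_cast hz⟩
      rw [convexHull_insert hP'coene] at hq
      rw [mem_convexJoin] at hq
      obtain ⟨a', ha', q', hq', hseg⟩ := hq
      rw [Set.mem_singleton_iff] at ha'
      rw [ha'] at hseg
      rw [segment_eq_image'] at hseg
      obtain ⟨s, ⟨hs0, hs1⟩, hqeq⟩ := hseg
      have hqeq' : v + s • (q' - v) = q := hqeq
      -- q = v + s • (q' - v) with q' in hull of P'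
      set σq' := col3 u w q' with hσq'
      have hσq'le : σq' ≤ 0 := hHσ hq'
      have hσv : col3 u w v = col3 v u w := by rw [col3_rot, col3_rot]
      have hσq : col3 u w q = (1-s) * col3 v u w + s * σq' := by
        rw [← hqeq', col3_seg, hσv]
      apply Set.mem_iUnion₂.mpr
      by_cases hcase : 0 ≤ col3 u w q
      · -- q is in the new triangle
        refine ⟨(v, u, w), Finset.mem_insert_self _ _, ?_⟩
        show q ∈ tri v u w
        apply mem_tri_of_col3 hW hcase
        · -- 0 ≤ col3 w v q
          have h1 : col3 w v q = - col3 v w q := by rw [col3_swap12]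
          have h2 : col3 v w q = (1-s) * col3 v w v + s * col3 v w q' := by
            rw [← hqeq', col3_seg]
          have h3 : col3 v w v = 0 := by unfold col3; ring
          have h4 : col3 v w q' ≤ 0 := hHw2 hq'
          rw [h1, h2, h3]
          nlinarith
        · -- 0 ≤ col3 v u q
          have h2 : col3 v u q = (1-s) * col3 v u v + s * col3 v u q' := by
            rw [← hqeq', col3_seg]
          have h3 : col3 v u v = 0 := by unfold col3; ring
          have h4 : 0 ≤ col3 v u q' := hHw1 hq'
          rw [h2, h3]
          nlinarith
      · -- q is beyond the chord : q lies in the hull of P'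
        push_neg at hcase
        have hσq'neg : σq' < 0 := by
          rcases lt_or_eq_of_le hσq'le with h | h
          · exact h
          · exfalso
            rw [h] at hσq
            have : col3 u w q = (1-s) * col3 v u w := by rw [hσq]; ring
            nlinarith
        set tstar : ℝ := col3 v u w / (col3 v u w - σq') with htstar
        have hden : 0 < col3 v u w - σq' := by linarith
        have ht0 : 0 < tstar := div_pos hW hden
        have ht1 : tstar < 1 := by
          rw [htstar, div_lt_one hden]
          linarith
        set xstar : ℝ × ℝ := v + tstar • (q' - v) with hxstar
        have hσx : col3 u w xstar = 0 := by
          rw [hxstar, col3_seg, hσv, htstar]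
          field_simp
          rw [hσq']
          ring
        -- xstar lies on the segment [u, w]
        have hxseg : xstar ∈ segment ℝ u w := by
          have hwune : w - u ≠ 0 := sub_ne_zero.mpr (Ne.symm huw)
          have hcross : (w - u).1 * (xstar - u).2 - (w - u).2 * (xstar - u).1 = 0 := by
            have : col3 u w xstar = (w - u).1 * (xstar - u).2 - (w - u).2 * (xstar - u).1 := by
              unfold col3; simp only [Prod.fst_sub, Prod.snd_sub]
            rw [← this, hσx]
          obtain ⟨l, hl⟩ := exists_smul_of_cross_eq_zero hwune hcross
          have hxeq : xstar = u + l • (w - u) := by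
            have : xstar - u = l • (w - u) := hl
            linear_combination (norm := module) this
          -- bounds on l
          have hcol1 : col3 v u xstar = l * col3 v u w := by
            rw [hxeq]
            unfold col3
            simp only [Prod.fst_add, Prod.snd_add, Prod.smul_fst, Prod.smul_snd,
              Prod.fst_sub, Prod.snd_sub, smul_eq_mul]
            ring
          have hcol2 : col3 v w xstar = (l - 1) * col3 v u w := by
            rw [hxeq]
            unfold col3
            simp only [Prod.fst_add, Prod.snd_add, Prod.smul_fst, Prod.smul_snd,
              Prod.fst_sub, Prod.snd_sub, smul_eq_mul]
            ring
          have hge : 0 ≤ col3 v u xstar := by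
            have : col3 v u xstar = tstar * col3 v u q' := by
              rw [hxstar, col3_seg]
              have : col3 v u v = 0 := by unfold col3; ring
              rw [this]; ring
            rw [this]
            have h4 : 0 ≤ col3 v u q' := hHw1 hq'
            nlinarith
          have hle : col3 v w xstar ≤ 0 := by
            have : col3 v w xstar = tstar * col3 v w q' := by
              rw [hxstar, col3_seg]
              have : col3 v w v = 0 := by unfold col3; ring
              rw [this]; ring
            rw [this]
            have h4 : col3 v w q' ≤ 0 := hHw2 hq'
            nlinarith
          have hl0 : 0 ≤ l := by nlinarith [hcol1, hge, hW]
          have hl1 : l ≤ 1 := by nlinarith [hcol2, hle, hW]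
          exact mem_segment_param hl0 hl1 hxeq
        have hxhull : xstar ∈ convexHull ℝ (P' : Set (ℝ × ℝ)) := by
          have : segment ℝ u w ⊆ convexHull ℝ (P' : Set (ℝ × ℝ)) := by
            rw [← convexHull_pair]
            apply convexHull_mono
            intro z hz
            rcases hz with h | h <;> rw [h]
            · exact_mod_cast hu
            · exact_mod_cast hw
          exact this hxseg
        -- q lies on the segment [xstar, q']
        have hstar : tstar < s := by
          by_contra hcon
          push_neg at hcon
          have : 0 ≤ (1-s) * col3 v u w + s * σq' := by
            have e1 : s * (col3 v u w - σq') ≤ tstar * (col3 v u w - σq') := by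
              nlinarith
            have e2 : tstar * (col3 v u w - σq') = col3 v u w := by
              rw [htstar]; field_simp
            nlinarith
          linarith [hσq ▸ hcase]
        have hqseg : q ∈ segment ℝ xstar q' := by
          set μ : ℝ := (s - tstar) / (1 - tstar) with hμ
          have hμ0 : 0 ≤ μ := div_nonneg (by linarith) (by linarith)
          have hμ1 : μ ≤ 1 := by
            rw [hμ, div_le_one (by linarith)]
            linarith
          apply mem_segment_param hμ0 hμ1
          rw [hxstar, ← hqeq']
          have hqx : v + s • (q' - v) - (v + tstar • (q' - v)) = (s - tstar) • (q' - v) := by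
            module
          have hq'x : q' - (v + tstar • (q' - v)) = (1 - tstar) • (q' - v) := by
            module
          rw [hq'x]
          have : μ • ((1 - tstar) • (q' - v)) = (s - tstar) • (q' - v) := by
            have hne : (1:ℝ) - tstar ≠ 0 := by linarith
            rw [smul_smul]
            congr 1
            rw [hμ]
            field_simp
          rw [this]
          module
        have hqhull : q ∈ convexHull ℝ (P' : Set (ℝ × ℝ)) := by
          have hconv := convex_convexHull ℝ (P' : Set (ℝ × ℝ))
          exact hconv.segment_subset hxhull hq' hqseg
        obtain ⟨T0, hT0⟩ := Set.mem_iUnion₂.mp (hF'cov hqhull)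
        exact ⟨T0, Finset.mem_insert_of_mem hT0.1, hT0.2⟩
    · -- cardinality
      rw [Finset.card_insert_of_notMem hnotin]
      omega

lemma subdivide {a b c x : ℝ × ℝ} (hD : 0 < col3 a b c) (hx : x ∈ interior (tri a b c)) :
    (tri a b c ⊆ tri x a b ∪ tri x b c ∪ tri x c a) ∧
    (interior (tri x a b) ∩ interior (tri x b c) = ∅) ∧
    (interior (tri x b c) ∩ interior (tri x c a) = ∅) ∧
    (interior (tri x a b) ∩ interior (tri x c a) = ∅) ∧
    tri x a b ⊆ tri a b c ∧ tri x b c ⊆ tri a b c ∧ tri x c a ⊆ tri a b c := by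
  obtain ⟨hXa, hXb, hXc⟩ := interior_tri_pos hD hx
  -- hXa : 0 < col3 b c x, hXb : 0 < col3 c a x, hXc : 0 < col3 a b x
  have hOc : 0 < col3 x a b := by
    have : col3 x a b = col3 a b x := by rw [col3_rot]
    linarith
  have hOa : 0 < col3 x b c := by
    have : col3 x b c = col3 b c x := by rw [col3_rot]
    linarith
  have hOb : 0 < col3 x c a := by
    have : col3 x c a = col3 c a x := by rw [col3_rot]
    linarith
  have hxmem : x ∈ tri a b c := interior_subset hx
  have hamem : a ∈ tri a b c := subset_convexHull ℝ _ (by simp [tri])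
  have hbmem : b ∈ tri a b c := subset_convexHull ℝ _ (by simp [tri])
  have hcmem : c ∈ tri a b c := subset_convexHull ℝ _ (by simp [tri])
  have hconv := convex_convexHull ℝ ({a, b, c} : Set (ℝ × ℝ))
  have hsub1 : tri x a b ⊆ tri a b c := tri_subset_convex hconv hxmem hamem hbmem
  have hsub2 : tri x b c ⊆ tri a b c := tri_subset_convex hconv hxmem hbmem hcmem
  have hsub3 : tri x c a ⊆ tri a b c := tri_subset_convex hconv hxmem hcmem hamem
  -- identities
  have hI2 : ∀ q, col3 a b c * col3 b x q =
      col3 a b x * col3 b c q - col3 b c x * col3 a b q := by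
    intro q; unfold col3; ring
  have hI3 : ∀ q, col3 a b c * col3 x b q =
      col3 b c x * col3 a b q - col3 a b x * col3 b c q := by
    intro q; unfold col3; ring
  have hI4 : ∀ q, col3 a b c * col3 c x q =
      col3 b c x * col3 c a q - col3 c a x * col3 b c q := by
    intro q; unfold col3; ring
  have hI5 : ∀ q, col3 a b c * col3 x c q =
      col3 c a x * col3 b c q - col3 b c x * col3 c a q := by
    intro q; unfold col3; ring
  have hI6 : ∀ q, col3 a b c * col3 a x q =
      col3 c a x * col3 a b q - col3 a b x * col3 c a q := by
    intro q; unfold col3; ring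
  have hI1 : ∀ q, col3 a b c * col3 x a q =
      col3 a b x * col3 c a q - col3 c a x * col3 a b q := by
    intro q; unfold col3; ring
  refine ⟨?_, ?_, ?_, ?_, hsub1, hsub2, hsub3⟩
  · -- covering
    intro q hq
    obtain ⟨hQa, hQb, hQc⟩ := (mem_tri_iff_col3 hD).mp hq
    set M1 : ℝ := col3 b c x * col3 c a q - col3 c a x * col3 b c q with hM1
    set M2 : ℝ := col3 c a x * col3 a b q - col3 a b x * col3 c a q with hM2
    set M3 : ℝ := col3 a b x * col3 b c q - col3 b c x * col3 a b q with hM3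
    have hsyz : col3 b c x * M2 + col3 c a x * M3 + col3 a b x * M1 = 0 := by
      rw [hM1, hM2, hM3]; ring
    have hS1 : M2 ≤ 0 → 0 ≤ M3 → q ∈ tri x a b := by
      intro h2 h3
      apply mem_tri_of_col3 hOc hQc
      · -- 0 ≤ col3 b x q
        have := hI2 q
        rw [hM3] at h3
        nlinarith
      · -- 0 ≤ col3 x a q
        have := hI1 q
        rw [hM2] at h2
        nlinarith
    have hS2 : M3 ≤ 0 → 0 ≤ M1 → q ∈ tri x b c := by
      intro h3 h1
      apply mem_tri_of_col3 hOa hQa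
      · -- 0 ≤ col3 c x q
        have := hI4 q
        rw [hM1] at h1
        nlinarith
      · -- 0 ≤ col3 x b q
        have := hI3 q
        rw [hM3] at h3
        nlinarith
    have hS3 : M1 ≤ 0 → 0 ≤ M2 → q ∈ tri x c a := by
      intro h1 h2
      apply mem_tri_of_col3 hOb hQb
      · -- 0 ≤ col3 a x q
        have := hI6 q
        rw [hM2] at h2
        nlinarith
      · -- 0 ≤ col3 x c q
        have := hI5 q
        rw [hM1] at h1
        nlinarith
    simp only [Set.mem_union]
    rcases le_or_gt M1 0 with h1 | h1
    · rcases le_or_gt 0 M2 with h2 | h2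
      · exact Or.inr (hS3 h1 h2)
      · rcases le_or_gt 0 M3 with h3 | h3
        · exact Or.inl (Or.inl (hS1 h2.le h3))
        · exfalso; nlinarith
    · rcases le_or_gt M3 0 with h3 | h3
      · exact Or.inl (Or.inr (hS2 h3 h1.le))
      · have h2 : M2 < 0 := by nlinarith
        exact Or.inl (Or.inl (hS1 h2.le h3.le))
  · -- S1 ∩ S2
    rw [Set.eq_empty_iff_forall_notMem]
    rintro q ⟨k1, k2⟩
    have p1 := (interior_tri_pos hOc k1).2.1
    have p2 := (interior_tri_pos hOa k2).2.2  -- conds for tri x b c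
    -- p1 : 0 < col3 a b q? need care
    have e2 := hI2 q
    have e3 := hI3 q
    nlinarith [p1, p2, hD]
  · -- S2 ∩ S3
    rw [Set.eq_empty_iff_forall_notMem]
    rintro q ⟨k1, k2⟩
    have p1 := (interior_tri_pos hOa k1).2.1  -- for tri x b c : 0 < col3 c x q
    have p2 := (interior_tri_pos hOb k2).2.2  -- for tri x c a : 0 < col3 x c q
    have e4 := hI4 q
    have e5 := hI5 q
    nlinarith [p1, p2, hD]
  · -- S1 ∩ S3
    rw [Set.eq_empty_iff_forall_notMem]
    rintro q ⟨k1, k2⟩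
    have p1 := (interior_tri_pos hOc k1).2.2  -- for tri x a b : 0 < col3 x a q
    have p2 := (interior_tri_pos hOb k2).2.1  -- for tri x c a : 0 < col3 a x q
    have e1 := hI1 q
    have e6 := hI6 q
    nlinarith [p1, p2, hD]

lemma mem_hull_erase {P : Finset (ℝ × ℝ)} {x : ℝ × ℝ} (hx : x ∈ P)
    (hne : (P.erase x).Nonempty)
    (hint : x ∈ interior (convexHull ℝ (P : Set (ℝ × ℝ)))) :
    x ∈ convexHull ℝ ((P.erase x : Finset (ℝ × ℝ)) : Set (ℝ × ℝ)) := by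
  by_contra hnot
  have hclosed : IsClosed (convexHull ℝ ((P.erase x : Finset (ℝ × ℝ)) : Set (ℝ × ℝ))) :=
    ((Finset.finite_toSet _).isCompact_convexHull (𝕜 := ℝ)).isClosed
  obtain ⟨f, u, hfu, hux⟩ :=
    geometric_hahn_banach_closed_point (convex_convexHull ℝ _) hclosed hnot
  have hlin : IsLinearMap ℝ f := ⟨f.map_add, f.map_smul⟩
  have hhull : convexHull ℝ (P : Set (ℝ × ℝ)) ⊆ {y | f y ≤ f x} := by
    apply convexHull_min _ (convex_halfSpace_le hlin (f x))
    intro z hz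
    by_cases hzx : z = x
    · simp [hzx]
    · have hz' : z ∈ convexHull ℝ ((P.erase x : Finset (ℝ × ℝ)) : Set (ℝ × ℝ)) := by
        apply subset_convexHull
        have : z ∈ P.erase x := Finset.mem_erase.mpr ⟨hzx, by exact_mod_cast hz⟩
        exact_mod_cast this
      have := hfu _ hz'
      simp only [Set.mem_setOf_eq]
      linarith
  rw [mem_interior_iff_mem_nhds, Metric.mem_nhds_iff] at hint
  obtain ⟨ε, hε, hball⟩ := hint
  obtain ⟨a0, ha0⟩ := hne
  have ha0hull : a0 ∈ convexHull ℝ ((P.erase x : Finset (ℝ × ℝ)) : Set (ℝ × ℝ)) :=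
    subset_convexHull ℝ _ (by exact_mod_cast ha0)
  have hfa0 : f a0 < u := hfu _ ha0hull
  set v0 : ℝ × ℝ := x - a0 with hv0
  have hfv0 : 0 < f v0 := by
    rw [hv0, map_sub]
    linarith
  set δ : ℝ := ε / (2 * (‖v0‖ + 1)) with hδ
  have hδpos : 0 < δ := div_pos hε (by positivity)
  have hy : x + δ • v0 ∈ Metric.ball x ε := by
    simp only [Metric.mem_ball, dist_eq_norm, add_sub_cancel_left, norm_smul,
      Real.norm_eq_abs, abs_of_pos hδpos]
    have hb1 : δ * ‖v0‖ ≤ δ * (‖v0‖ + 1) := by nlinarith [norm_nonneg v0]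
    have hb2 : δ * (‖v0‖ + 1) = ε / 2 := by rw [hδ]; field_simp
    linarith
  have hmem := hhull (hball hy)
  simp only [Set.mem_setOf_eq, map_add, map_smul, smul_eq_mul] at hmem
  nlinarith

lemma master (k : ℕ) : ∀ P : Finset (ℝ × ℝ), GPd P → 3 ≤ P.card → (intPts P).card = k →
    ∃ F, goodFam P F ∧ P.card - 2 + k ≤ F.card := by
  induction k using Nat.strong_induction_on with
  | _ k ih =>
  intro P hgp h3 hk
  rcases Nat.eq_zero_or_pos k with hk0 | hkpos
  · subst hk0
    have hint : intPts P = ∅ := Finset.card_eq_zero.mp hk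
    obtain ⟨F, hF, hcard⟩ := convexFan P.card P hgp h3 rfl hint
    exact ⟨F, hF, by omega⟩
  · have hne : (intPts P).Nonempty := Finset.card_pos.mp (by omega)
    obtain ⟨x, hxint'⟩ := hne
    have hxP : x ∈ P := (Finset.mem_filter.mp hxint').1
    have hxint : x ∈ interior (convexHull ℝ (P : Set (ℝ × ℝ))) :=
      (Finset.mem_filter.mp hxint').2
    have hm4 : 4 ≤ P.card := by
      by_contra hcon
      have hm3 : P.card = 3 := by omega
      obtain ⟨a, b, c, hab, hac, hbc, hPeq⟩ := Finset.card_eq_three.mp hm3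
      have hamem : a ∈ P := by rw [hPeq]; simp
      have hbmem : b ∈ P := by rw [hPeq]; simp
      have hcmem : c ∈ P := by rw [hPeq]; simp
      have hD : col3 a b c ≠ 0 := hgp a hamem b hbmem c hcmem hab hac hbc
      have hcoe : (P : Set (ℝ × ℝ)) = {a, b, c} := by rw [hPeq]; simp
      have : x ∈ interior (tri a b c) := by
        rw [tri, ← hcoe]; exact hxint
      have hxv : x = a ∨ x = b ∨ x = c := by
        have := hxP
        rw [hPeq] at this
        simpa using this
      exact vertex_not_mem_interior hD hxv this
    set P' := P.erase x with hP'
    have hP'card : P'.card = P.card - 1 := Finset.card_erase_of_mem hxP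
    have hP'sub : P' ⊆ P := Finset.erase_subset x P
    have hP'ne : P'.Nonempty := Finset.card_pos.mp (by omega)
    have hxhull : x ∈ convexHull ℝ (P' : Set (ℝ × ℝ)) :=
      mem_hull_erase hxP hP'ne hxint
    have hhull_eq : convexHull ℝ (P' : Set (ℝ × ℝ)) = convexHull ℝ (P : Set (ℝ × ℝ)) := by
      apply Set.Subset.antisymm
      · exact convexHull_mono (by exact_mod_cast hP'sub)
      · apply convexHull_min _ (convex_convexHull ℝ _)
        intro z hz
        by_cases hzx : z = x
        · rw [hzx]; exact hxhull
        · apply subset_convexHull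
          have : z ∈ P' := Finset.mem_erase.mpr ⟨hzx, by exact_mod_cast hz⟩
          exact_mod_cast this
    have hint'eq : intPts P' = (intPts P).erase x := by
      ext z
      have hhe := hhull_eq
      rw [hP'] at hhe
      simp only [intPts, hP', Finset.mem_filter, Finset.mem_erase]
      rw [hhe]
      tauto
    have hk' : (intPts P').card = k - 1 := by
      rw [hint'eq, Finset.card_erase_of_mem hxint', hk]
    have hgp' : GPd P' := hgp.mono hP'sub
    obtain ⟨F', hF', hF'card⟩ := ih (k-1) (by omega) P' hgp' (by omega) hk'
    obtain ⟨hF'v, hF'e, hF'd, hF'cov⟩ := hF'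
    -- find the triangle of F' containing x
    have hxcov : x ∈ ⋃ T ∈ F', ctri T := hF'cov hxhull
    obtain ⟨T0, hT0F, hxT0⟩ := Set.mem_iUnion₂.mp hxcov
    obtain ⟨⟨ha, hb, hc⟩, hab, hac, hbc⟩ := hF'v T0 hT0F
    set a := T0.1 with hadef
    set b := T0.2.1 with hbdef
    set c := T0.2.2 with hcdef
    have hxa : x ≠ a := fun h => (Finset.mem_erase.mp (h ▸ ha)).1 rfl
    have hxb : x ≠ b := fun h => (Finset.mem_erase.mp (h ▸ hb)).1 rfl
    have hxc : x ≠ c := fun h => (Finset.mem_erase.mp (h ▸ hc)).1 rfl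
    have haP : a ∈ P := hP'sub ha
    have hbP : b ∈ P := hP'sub hb
    have hcP : c ∈ P := hP'sub hc
    have hD0 : col3 a b c ≠ 0 := hgp a haP b hbP c hcP hab hac hbc
    have hxintT0 : x ∈ interior (tri a b c) := by
      apply mem_interior_of_mem_tri hD0 hxT0
      · exact hgp b hbP c hcP x hxP hbc (Ne.symm hxb) (Ne.symm hxc)
      · exact hgp c hcP a haP x hxP (Ne.symm hac) (Ne.symm hxc) (Ne.symm hxa)
      · exact hgp a haP b hbP x hxP hab (Ne.symm hxa) (Ne.symm hxb)
    -- choose a positively oriented labeling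
    obtain ⟨p1, p2, p3, hpor, htrieq, hp1, hp2, hp3, hp12, hp13, hp23⟩ :
        ∃ p1 p2 p3 : ℝ × ℝ, 0 < col3 p1 p2 p3 ∧ tri p1 p2 p3 = tri a b c ∧
          p1 ∈ P' ∧ p2 ∈ P' ∧ p3 ∈ P' ∧ p1 ≠ p2 ∧ p1 ≠ p3 ∧ p2 ≠ p3 := by
      rcases lt_or_gt_of_ne hD0 with h | h
      · refine ⟨a, c, b, ?_, (tri_swap a b c).symm, ha, hc, hb,
          hac, hab, Ne.symm hbc⟩
        have := col3_swap a b c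
        linarith
      · exact ⟨a, b, c, h, rfl, ha, hb, hc, hab, hac, hbc⟩
    have htrieq' : tri p1 p2 p3 = ctri T0 := htrieq
    have hxintp : x ∈ interior (tri p1 p2 p3) := by rw [htrieq]; exact hxintT0
    obtain ⟨hcover, hd12, hd23, hd13, hs1, hs2, hs3⟩ := subdivide hpor hxintp
    obtain ⟨hX1, hX2, hX3⟩ := interior_tri_pos hpor hxintp
    -- the three subdivision triangles
    set S1 : (ℝ × ℝ) × (ℝ × ℝ) × (ℝ × ℝ) := (x, p1, p2) with hS1def
    set S2 : (ℝ × ℝ) × (ℝ × ℝ) × (ℝ × ℝ) := (x, p2, p3) with hS2def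
    set S3 : (ℝ × ℝ) × (ℝ × ℝ) × (ℝ × ℝ) := (x, p3, p1) with hS3def
    have hctriS1 : ctri S1 = tri x p1 p2 := rfl
    have hctriS2 : ctri S2 = tri x p2 p3 := rfl
    have hctriS3 : ctri S3 = tri x p3 p1 := rfl
    have hitriS1 : itri S1 ⊆ itri T0 := by
      rw [itri, hctriS1, itri, ← htrieq']
      exact interior_mono hs1
    have hitriS2 : itri S2 ⊆ itri T0 := by
      rw [itri, hctriS2, itri, ← htrieq']
      exact interior_mono hs2
    have hitriS3 : itri S3 ⊆ itri T0 := by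
      rw [itri, hctriS3, itri, ← htrieq']
      exact interior_mono hs3
    have hxS1 : x ∉ itri S1 := by
      apply vertex_not_mem_interior (z := x) _ (Or.inl rfl)
      have h1 : col3 x p1 p2 = col3 p1 p2 x := by rw [col3_rot]
      rw [itri, hctriS1] at *
      intro h0
      rw [h0] at h1
      linarith
    have hxS2 : x ∉ itri S2 := by
      apply vertex_not_mem_interior (z := x) _ (Or.inl rfl)
      have h1 : col3 x p2 p3 = col3 p2 p3 x := by rw [col3_rot]
      intro h0
      rw [h0] at h1
      linarith
    have hxS3 : x ∉ itri S3 := by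
      apply vertex_not_mem_interior (z := x) _ (Or.inl rfl)
      have h1 : col3 x p3 p1 = col3 p3 p1 x := by rw [col3_rot]
      intro h0
      rw [h0] at h1
      linarith
    -- S-triangles are P-empty
    have hSempty : ∀ S, (S = S1 ∨ S = S2 ∨ S = S3) → ∀ z ∈ P, z ∉ itri S := by
      intro S hS z hz hzS
      have hsub : itri S ⊆ itri T0 := by
        rcases hS with h | h | h
        · rw [h]; exact hitriS1
        · rw [h]; exact hitriS2
        · rw [h]; exact hitriS3
      by_cases hzx : z = x
      · rcases hS with h | h | h
        · rw [h] at hzS; exact hxS1 (hzx ▸ hzS)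
        · rw [h] at hzS; exact hxS2 (hzx ▸ hzS)
        · rw [h] at hzS; exact hxS3 (hzx ▸ hzS)
      · have hzP' : z ∈ P' := Finset.mem_erase.mpr ⟨hzx, hz⟩
        exact hF'e T0 hT0F z hzP' (hsub hzS)
    -- distinctness of the new triangles from each other and from old ones
    have hSnotold : ∀ S, (S = S1 ∨ S = S2 ∨ S = S3) → ∀ T ∈ F', S ≠ T := by
      intro S hS T hT he
      have hT1 : T.1 ∈ P' := (hF'v T hT).1.1
      have hS1' : S.1 = x := by
        rcases hS with h | h | h
        · rw [h]
        · rw [h]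
        · rw [h]
      rw [he] at hS1'
      rw [hS1'] at hT1
      exact (Finset.mem_erase.mp hT1).1 rfl
    have hS1S2 : S1 ≠ S2 := by
      intro h
      rw [hS1def, hS2def] at h
      exact hp12 (congrArg (fun T => T.2.1) h)
    have hS1S3 : S1 ≠ S3 := by
      intro h
      rw [hS1def, hS3def] at h
      exact hp13 (congrArg (fun T => T.2.1) h)
    have hS2S3 : S2 ≠ S3 := by
      intro h
      rw [hS2def, hS3def] at h
      exact hp23 (congrArg (fun T => T.2.1) h)
    -- the new family
    set F : Finset ((ℝ × ℝ) × (ℝ × ℝ) × (ℝ × ℝ)) :=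
      insert S1 (insert S2 (insert S3 (F'.erase T0))) with hF
    have hmemF : ∀ T ∈ F, T = S1 ∨ T = S2 ∨ T = S3 ∨ (T ∈ F' ∧ T ≠ T0) := by
      intro T hT
      rw [hF] at hT
      rcases Finset.mem_insert.mp hT with h | h
      · exact Or.inl h
      rcases Finset.mem_insert.mp h with h | h
      · exact Or.inr (Or.inl h)
      rcases Finset.mem_insert.mp h with h | h
      · exact Or.inr (Or.inr (Or.inl h))
      · exact Or.inr (Or.inr (Or.inr ⟨Finset.mem_of_mem_erase h, (Finset.mem_erase.mp h).1⟩))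
    have hcardF : F.card = F'.card + 2 := by
      rw [hF]
      rw [Finset.card_insert_of_notMem, Finset.card_insert_of_notMem,
        Finset.card_insert_of_notMem, Finset.card_erase_of_mem hT0F]
      · have : 1 ≤ F'.card := Finset.card_pos.mpr ⟨T0, hT0F⟩
        omega
      · intro h
        exact hSnotold S3 (by tauto) S3 (Finset.mem_of_mem_erase h) rfl
      · intro h
        rcases Finset.mem_insert.mp h with h | h
        · exact hS2S3 h
        · exact hSnotold S2 (by tauto) S2 (Finset.mem_of_mem_erase h) rfl
      · intro h
        rcases Finset.mem_insert.mp h with h | h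
        · exact hS1S2 h
        rcases Finset.mem_insert.mp h with h | h
        · exact hS1S3 h
        · exact hSnotold S1 (by tauto) S1 (Finset.mem_of_mem_erase h) rfl
    -- disjointness helper : each new triangle is interior-disjoint from every old one
    have hSold : ∀ S, (S = S1 ∨ S = S2 ∨ S = S3) → ∀ T ∈ F', T ≠ T0 → itri S ∩ itri T = ∅ := by
      intro S hS T hT hTne
      have hsub : itri S ⊆ itri T0 := by
        rcases hS with h | h | h
        · rw [h]; exact hitriS1
        · rw [h]; exact hitriS2
        · rw [h]; exact hitriS3
      have hd := hF'd T0 hT0F T hT (Ne.symm hTne)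
      rw [Set.eq_empty_iff_forall_notMem]
      rintro y ⟨hy1, hy2⟩
      rw [Set.eq_empty_iff_forall_notMem] at hd
      exact hd y ⟨hsub hy1, hy2⟩
    refine ⟨F, ⟨?_, ?_, ?_, ?_⟩, ?_⟩
    · -- vertices and distinctness
      intro T hT
      have hxp : ∀ p ∈ P', x ≠ p := fun p hp he => (Finset.mem_erase.mp (he ▸ hp)).1 rfl
      rcases hmemF T hT with h | h | h | ⟨h, _⟩
      · rw [h]
        exact ⟨⟨hxP, hP'sub hp1, hP'sub hp2⟩, hxp p1 hp1, hxp p2 hp2, hp12⟩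
      · rw [h]
        exact ⟨⟨hxP, hP'sub hp2, hP'sub hp3⟩, hxp p2 hp2, hxp p3 hp3, hp23⟩
      · rw [h]
        exact ⟨⟨hxP, hP'sub hp3, hP'sub hp1⟩, hxp p3 hp3, hxp p1 hp1, Ne.symm hp13⟩
      · obtain ⟨⟨k1, k2, k3⟩, k4⟩ := hF'v T h
        exact ⟨⟨hP'sub k1, hP'sub k2, hP'sub k3⟩, k4⟩
    · -- emptiness
      intro T hT z hz
      rcases hmemF T hT with h | h | h | ⟨h, hne'⟩
      · rw [h]; exact hSempty S1 (by tauto) z hz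
      · rw [h]; exact hSempty S2 (by tauto) z hz
      · rw [h]; exact hSempty S3 (by tauto) z hz
      · by_cases hzx : z = x
        · intro hzT
          have hd := hF'd T0 hT0F T h (Ne.symm hne')
          rw [Set.eq_empty_iff_forall_notMem] at hd
          exact hd x ⟨hxintT0, hzx ▸ hzT⟩
        · exact hF'e T h z (Finset.mem_erase.mpr ⟨hzx, hz⟩)
    · -- pairwise disjointness
      intro T hT T' hT' hne'
      have hswap : ∀ A B : Set (ℝ × ℝ), A ∩ B = ∅ → B ∩ A = ∅ := by
        intro A B h
        rw [Set.inter_comm]; exact h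
      rcases hmemF T hT with h | h | h | ⟨h, hTn⟩ <;>
        rcases hmemF T' hT' with h' | h' | h' | ⟨h', hTn'⟩
      · exact absurd (h.trans h'.symm) hne'
      · rw [h, h']; exact hd12
      · rw [h, h']; exact hd13
      · rw [h]; exact hSold S1 (by tauto) T' h' hTn'
      · rw [h, h']; exact hswap _ _ hd12
      · exact absurd (h.trans h'.symm) hne'
      · rw [h, h']; exact hd23
      · rw [h]; exact hSold S2 (by tauto) T' h' hTn'
      · rw [h, h']; exact hswap _ _ hd13
      · rw [h, h']; exact hswap _ _ hd23
      · exact absurd (h.trans h'.symm) hne'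
      · rw [h]; exact hSold S3 (by tauto) T' h' hTn'
      · rw [h']; exact hswap _ _ (hSold S1 (by tauto) T h hTn)
      · rw [h']; exact hswap _ _ (hSold S2 (by tauto) T h hTn)
      · rw [h']; exact hswap _ _ (hSold S3 (by tauto) T h hTn)
      · exact hF'd T h T' h' hne'
    · -- covering
      intro q hq
      rw [← hhull_eq] at hq
      obtain ⟨T'', hT''F, hqT''⟩ := Set.mem_iUnion₂.mp (hF'cov hq)
      apply Set.mem_iUnion₂.mpr
      by_cases hT''T0 : T'' = T0
      · have hqp : q ∈ tri p1 p2 p3 := by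
          rw [htrieq']
          exact hT''T0 ▸ hqT''
        rcases hcover hqp with hc' | hc'
        · rcases hc' with hc'' | hc''
          · exact ⟨S1, by rw [hF]; simp, hc''⟩
          · exact ⟨S2, by rw [hF]; simp, hc''⟩
        · exact ⟨S3, by rw [hF]; simp, hc'⟩
      · refine ⟨T'', ?_, hqT''⟩
        rw [hF]
        apply Finset.mem_insert_of_mem
        apply Finset.mem_insert_of_mem
        apply Finset.mem_insert_of_mem
        exact Finset.mem_erase.mpr ⟨hT''T0, hT''F⟩
    · -- cardinality
      rw [hcardF]
      omega

/-- Every 2-colored set of 10 points in general position contains a monochromatic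
empty triangle. -/
theorem ten_points_two_colors_empty (S : Finset (ℝ × ℝ)) (hcard : S.card = 10)
    (hgp : GenPos (S : Set (ℝ × ℝ))) (χ : ℝ × ℝ → Fin 2) :
    ∃ a ∈ S, ∃ b ∈ S, ∃ d ∈ S, a ≠ b ∧ a ≠ d ∧ b ≠ d ∧ χ a = χ b ∧ χ b = χ d ∧
      ∀ p ∈ S, p ∉ interior (convexHull ℝ ({a, b, d} : Set (ℝ × ℝ))) := by
  by_contra hcon
  push_neg at hcon
  -- general position in determinant form
  have hGP : GPd S := by
    intro a ha b hb c hc h1 h2 h3 h0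
    exact hgp a (Finset.mem_coe.mpr ha) b (Finset.mem_coe.mpr hb) c (Finset.mem_coe.mpr hc)
      h1 h2 h3 (collinear_of_col3_eq_zero h1 h0)
  -- a majority color
  have hmaj : ∃ i : Fin 2, 5 ≤ (S.filter (fun z => χ z = i)).card := by
    by_contra h
    push_neg at h
    have h0 := h 0
    have h1 := h 1
    have hsplit : (S.filter (fun z => χ z = 0)).card + (S.filter (fun z => ¬ χ z = 0)).card
        = S.card := Finset.card_filter_add_card_filter_not _
    have heq : S.filter (fun z => ¬ χ z = 0) = S.filter (fun z => χ z = 1) := by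
      apply Finset.filter_congr
      intro z _
      constructor
      · intro hz
        have : ∀ i : Fin 2, i ≠ 0 → i = 1 := by decide
        exact this _ hz
      · intro hz
        rw [hz]; decide
    rw [heq] at hsplit
    omega
  obtain ⟨i0, hi0⟩ := hmaj
  have hcol2' : ∀ i u v : Fin 2, u ≠ i → v ≠ i → u = v := by decide
  have hcol2 := hcol2' i0
  set R := S.filter (fun z => χ z = i0) with hR
  have hRsub : R ⊆ S := Finset.filter_subset _ _
  have hGPR : GPd R := hGP.mono hRsub
  obtain ⟨FR, ⟨hFRv, hFRe, hFRd, _⟩, hFRcard⟩ :=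
    master (intPts R).card R hGPR (by omega) rfl
  -- the set of opposite-colored points inside the hull of R
  set B : Finset (ℝ × ℝ) :=
    S.filter (fun z => χ z ≠ i0 ∧ z ∈ interior (convexHull ℝ (R : Set (ℝ × ℝ)))) with hB
  have hstab : ∀ T ∈ FR, ∃ p, p ∈ B ∧ p ∈ itri T := by
    intro T hT
    obtain ⟨⟨h1, h2, h3⟩, h4, h5, h6⟩ := hFRv T hT
    have e1 := Finset.mem_filter.mp h1
    have e2 := Finset.mem_filter.mp h2
    have e3 := Finset.mem_filter.mp h3
    obtain ⟨p, hpS, hpint⟩ := hcon T.1 e1.1 T.2.1 e2.1 T.2.2 e3.1 h4 h5 h6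
      (e1.2.trans e2.2.symm) (e2.2.trans e3.2.symm)
    have hpitri : p ∈ itri T := hpint
    have hpnR : p ∉ R := fun hpR => hFRe T hT p hpR hpitri
    have hpcol : χ p ≠ i0 := fun hc => hpnR (Finset.mem_filter.mpr ⟨hpS, hc⟩)
    have hpin : p ∈ interior (convexHull ℝ (R : Set (ℝ × ℝ))) :=
      itri_subset_int_hull h1 h2 h3 hpitri
    exact ⟨p, Finset.mem_filter.mpr ⟨hpS, hpcol, hpin⟩, hpitri⟩
  classical
  have hBcard : FR.card ≤ B.card := by
    apply Finset.card_le_card_of_injOn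
      (fun T => if h : T ∈ FR then Classical.choose (hstab T h) else 0)
    · intro T hT
      simp only [Finset.mem_coe] at hT ⊢
      rw [dif_pos hT]
      exact (Classical.choose_spec (hstab T hT)).1
    · intro T hT T' hT' he
      rw [Finset.mem_coe] at hT hT'
      simp only [dif_pos hT, dif_pos hT'] at he
      by_contra hne
      have hd := hFRd T hT T' hT' hne
      rw [Set.eq_empty_iff_forall_notMem] at hd
      exact hd (Classical.choose (hstab T hT))
        ⟨(Classical.choose_spec (hstab T hT)).2,
         he ▸ (Classical.choose_spec (hstab T' hT')).2⟩
  have hRcard : 5 ≤ R.card := hi0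
  have hBlower : R.card - 2 + (intPts R).card ≤ B.card := le_trans hFRcard hBcard
  have hB3 : 3 ≤ B.card := by omega
  have hGPB : GPd B := hGP.mono (Finset.filter_subset _ _)
  obtain ⟨FB, ⟨hFBv, hFBe, hFBd, _⟩, hFBcard⟩ :=
    master (intPts B).card B hGPB hB3 rfl
  have hconvint : Convex ℝ (interior (convexHull ℝ (R : Set (ℝ × ℝ)))) :=
    (convex_convexHull ℝ _).interior
  have hstab2 : ∀ T ∈ FB, ∃ p, p ∈ intPts R ∧ p ∈ itri T := by
    intro T hT
    obtain ⟨⟨h1, h2, h3⟩, h4, h5, h6⟩ := hFBv T hT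
    have e1 := Finset.mem_filter.mp h1
    have e2 := Finset.mem_filter.mp h2
    have e3 := Finset.mem_filter.mp h3
    obtain ⟨p, hpS, hpint⟩ := hcon T.1 e1.1 T.2.1 e2.1 T.2.2 e3.1 h4 h5 h6
      (hcol2 _ _ e1.2.1 e2.2.1) (hcol2 _ _ e2.2.1 e3.2.1)
    have hpitri : p ∈ itri T := hpint
    have hsubint : ctri T ⊆ interior (convexHull ℝ (R : Set (ℝ × ℝ))) :=
      tri_subset_convex hconvint e1.2.2 e2.2.2 e3.2.2
    have hpin : p ∈ interior (convexHull ℝ (R : Set (ℝ × ℝ))) :=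
      hsubint (interior_subset hpitri)
    have hpnB : p ∉ B := fun hpB => hFBe T hT p hpB hpitri
    have hpcol : χ p = i0 := by
      by_contra hc
      exact hpnB (Finset.mem_filter.mpr ⟨hpS, hc, hpin⟩)
    have hpR : p ∈ R := Finset.mem_filter.mpr ⟨hpS, hpcol⟩
    exact ⟨p, Finset.mem_filter.mpr ⟨hpR, hpin⟩, hpitri⟩
  have hk2 : FB.card ≤ (intPts R).card := by
    apply Finset.card_le_card_of_injOn
      (fun T => if h : T ∈ FB then Classical.choose (hstab2 T h) else 0)
    · intro T hT
      simp only [Finset.mem_coe] at hT ⊢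
      rw [dif_pos hT]
      exact (Classical.choose_spec (hstab2 T hT)).1
    · intro T hT T' hT' he
      rw [Finset.mem_coe] at hT hT'
      simp only [dif_pos hT, dif_pos hT'] at he
      by_contra hne
      have hd := hFBd T hT T' hT' hne
      rw [Set.eq_empty_iff_forall_notMem] at hd
      exact hd (Classical.choose (hstab2 T hT))
        ⟨(Classical.choose_spec (hstab2 T hT)).2,
         he ▸ (Classical.choose_spec (hstab2 T' hT')).2⟩
  have hfinal : B.card - 2 ≤ (intPts R).card := by
    have := hFBcard
    omega
  omega
end
end
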